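/- arXiv:1503.06286 — 3 statements merged into one kernel-verified Lean document; each statement's English description precedes it below -/
import Mathlib

section
/- Let k ≥ 3 and t ≥ 3 be integers and let λ be a real number with λ^{(t−1)} < λ < μ^{(t−1)}, where λ^{(t−1)} is the largest zero of G_{t−1} and μ^{(t−1)} the largest zero of F_{t−1}. Then there exist real numbers c₁ with 0 < c₁ < 1 and c₂ > 0 (namely c₁ = −F_{t−1}(λ)/G_{t−2}(λ) and c₂ = −F_t(λ)/G_{t−1}(λ)) such that λ is the second largest eigenvalue of both T(k,t,c₁) and T(k,t+1,c₂), and moreover M(k,t,c₁) > M(k,t+1,c₂). -/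
open Polynomial

/-- The adjacency matrix of a simple graph over `ℝ` is Hermitian. -/
theorem adjMatrix_isHermitian {V : Type*} [Fintype V] [DecidableEq V]
    (G : SimpleGraph V) [DecidableRel G.Adj] : (G.adjMatrix ℝ).IsHermitian := by
  rw [Matrix.IsHermitian, Matrix.conjTranspose_eq_transpose_of_trivial]
  exact G.isSymm_adjMatrix

/-- The multiset of adjacency eigenvalues (with multiplicity) of a finite simple graph. -/
noncomputable def eigMultiset {V : Type*} [Fintype V] [DecidableEq V]
    (G : SimpleGraph V) [DecidableRel G.Adj] : Multiset ℝ :=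
  Multiset.map (adjMatrix_isHermitian G).eigenvalues Finset.univ.val

/-- The second largest adjacency eigenvalue (with multiplicity) of a finite simple graph:
the second-to-last entry of the nondecreasing sorted list of eigenvalues. -/
noncomputable def secondEigenvalue {V : Type*} [Fintype V] [DecidableEq V]
    (G : SimpleGraph V) [DecidableRel G.Adj] : ℝ :=
  ((eigMultiset G).sort (· ≤ ·)).getD (((eigMultiset G).sort (· ≤ ·)).length - 2) 0

/-- The largest adjacency eigenvalue (spectral radius) of a finite simple graph. -/
noncomputable def largestEigenvalue {V : Type*} [Fintype V] [DecidableEq V]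
    (G : SimpleGraph V) [DecidableRel G.Adj] : ℝ :=
  ((eigMultiset G).sort (· ≤ ·)).getD (((eigMultiset G).sort (· ≤ ·)).length - 1) 0

/-- The orthogonal polynomials `F_i^{(k)}`. -/
noncomputable def Fpoly (k : ℕ) : ℕ → Polynomial ℝ
  | 0 => 1
  | 1 => X
  | 2 => X ^ 2 - C (k : ℝ)
  | n + 3 => X * Fpoly k (n + 2) - C ((k : ℝ) - 1) * Fpoly k (n + 1)

/-- `G_i = Σ_{j=0}^i F_j`. -/
noncomputable def Gpoly (k : ℕ) (i : ℕ) : Polynomial ℝ :=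
  ∑ j ∈ Finset.range (i + 1), Fpoly k j

/-- The tridiagonal matrix `T(k,t,c)`: superdiagonal `(k, k-1, …, k-1)`,
subdiagonal `(1, …, 1, c)`, diagonal chosen so that every row sums to `k`. -/
noncomputable def Tmat (k t : ℕ) (c : ℝ) : Matrix (Fin t) (Fin t) ℝ :=
  Matrix.of fun i j =>
    if (j : ℕ) = (i : ℕ) + 1 then (if (i : ℕ) = 0 then (k : ℝ) else (k : ℝ) - 1)
    else if (i : ℕ) = (j : ℕ) + 1 then (if (i : ℕ) = t - 1 then c else 1)
    else if i = j then
      (k : ℝ) - (if (i : ℕ) + 1 < t then (if (i : ℕ) = 0 then (k : ℝ) else (k : ℝ) - 1) else 0)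
        - (if 0 < (i : ℕ) then (if (i : ℕ) = t - 1 then c else 1) else 0)
    else 0

/-- `M(k,t,c) = 1 + Σ_{i=0}^{t-3} k (k-1)^i + k (k-1)^{t-2} / c`. -/
noncomputable def Mbound (k t : ℕ) (c : ℝ) : ℝ :=
  1 + (∑ i ∈ Finset.range (t - 2), (k : ℝ) * ((k : ℝ) - 1) ^ i)
    + (k : ℝ) * ((k : ℝ) - 1) ^ (t - 2) / c

namespace S9

variable {k : ℕ}

lemma F_zero : Fpoly k 0 = 1 := rfl
lemma F_one : Fpoly k 1 = X := rfl
lemma F_two : Fpoly k 2 = X ^ 2 - C (k:ℝ) := rfl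
lemma F_rec (n : ℕ) : Fpoly k (n+3) = X * Fpoly k (n+2) - C ((k:ℝ)-1) * Fpoly k (n+1) := rfl

lemma G_succ (n : ℕ) : Gpoly k (n+1) = Gpoly k n + Fpoly k (n+1) := Finset.sum_range_succ _ _

lemma G_zero : Gpoly k 0 = 1 := by simp [Gpoly, F_zero]
lemma G_one : Gpoly k 1 = 1 + X := by rw [G_succ, G_zero, F_one]
lemma G_two : Gpoly k 2 = 1 + X + (X^2 - C (k:ℝ)) := by rw [G_succ, G_one, F_two]

lemma G_rec (n : ℕ) : Gpoly k (n+2) = X * Gpoly k (n+1) - C ((k:ℝ)-1) * Gpoly k n := by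
  induction n with
  | zero =>
    rw [G_two, G_one, G_zero]
    simp [map_sub]; ring
  | succ n ih =>
    have h1 := G_succ (k := k) (n+2)
    have h2 := G_succ (k := k) (n+1)
    have h3 := G_succ (k := k) n
    have hr := F_rec (k := k) n
    linear_combination h1 + hr + (-X) * h2 + C ((k:ℝ)-1) * h3 + ih

lemma F_monic (n : ℕ) : (Fpoly k n).Monic ∧ (Fpoly k n).natDegree = n := by
  induction n using Nat.strong_induction_on with
  | _ n ih =>
    match n with
    | 0 => exact ⟨monic_one, natDegree_one⟩
    | 1 => exact ⟨monic_X, natDegree_X⟩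
    | 2 => constructor
           · have : (X ^ 2 - C (k:ℝ)).natDegree = 2 := by
               compute_degree!
             exact (monic_X_pow 2).sub_of_left (by
               rw [degree_X_pow]
               exact lt_of_le_of_lt (degree_C_le) (by norm_num))
           · rw [F_two]; compute_degree!
    | (m+3) => 
      obtain ⟨h2m, h2d⟩ := ih (m+2) (by omega)
      obtain ⟨h1m, h1d⟩ := ih (m+1) (by omega)
      have hmain : (X * Fpoly k (m+2)).Monic := monic_X.mul h2m
      have hdeg : (C ((k:ℝ)-1) * Fpoly k (m+1)).degree < (X * Fpoly k (m+2)).degree := by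
        apply lt_of_le_of_lt (degree_mul_le _ _)
        rw [degree_eq_natDegree hmain.ne_zero]
        have : (X * Fpoly k (m+2)).natDegree = m + 3 := by
          rw [natDegree_mul X_ne_zero h2m.ne_zero, natDegree_X, h2d]; omega
        rw [this]
        
        have hd1 : (Fpoly k (m+1)).degree = (m+1 : ℕ) := (degree_eq_natDegree h1m.ne_zero).trans (by rw [h1d])
        calc degree (C ((k:ℝ)-1)) + (Fpoly k (m+1)).degree ≤ 0 + (m+1 : ℕ) := by
              exact add_le_add degree_C_le (le_of_eq hd1)
          _ < ((m+3 : ℕ) : WithBot ℕ) := by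
              rw [zero_add]; exact_mod_cast by omega
      constructor
      · rw [F_rec, sub_eq_add_neg]
        exact hmain.add_of_left (by rwa [degree_neg])
      · rw [F_rec, sub_eq_add_neg]
        have := natDegree_add_eq_left_of_degree_lt (p := X * Fpoly k (m+2)) (q := -(C ((k:ℝ)-1) * Fpoly k (m+1))) (by rwa [degree_neg])
        rw [this, natDegree_mul X_ne_zero h2m.ne_zero, natDegree_X, h2d]; omega

lemma G_monic (n : ℕ) : (Gpoly k n).Monic ∧ (Gpoly k n).natDegree = n := by
  induction n with
  | zero => rw [G_zero]; exact ⟨monic_one, natDegree_one⟩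
  | succ n ih =>
    obtain ⟨hm, hd⟩ := ih
    obtain ⟨hm', hd'⟩ := F_monic (k := k) (n+1)
    have hdeg : (Gpoly k n).degree < (Fpoly k (n+1)).degree := by
      rw [degree_eq_natDegree hm.ne_zero, degree_eq_natDegree hm'.ne_zero, hd, hd']
      exact_mod_cast by omega
    constructor
    · rw [G_succ, add_comm]; exact hm'.add_of_left hdeg
    · rw [G_succ, add_comm, natDegree_add_eq_left_of_degree_lt hdeg, hd']

/-- positivity beyond all roots for monic polys -/
lemma pos_of_gt_roots {p : Polynomial ℝ} (hm : p.Monic) (hd : 0 < p.natDegree) {B y : ℝ}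
    (hroots : ∀ x : ℝ, p.IsRoot x → x ≤ B) (hy : B < y) : 0 < p.eval y := by
  by_contra h
  push_neg at h
  have htop : Filter.Tendsto (fun x => p.eval x) Filter.atTop Filter.atTop := by
    apply Polynomial.tendsto_atTop_of_leadingCoeff_nonneg
    · rw [degree_eq_natDegree hm.ne_zero]; exact_mod_cast hd
    · rw [hm.leadingCoeff]; norm_num
  obtain ⟨z, hz⟩ := (htop.eventually_ge_atTop 1).exists_forall_of_atTop
  have hyz : y ≤ max y z := le_max_left _ _
  have hz1 : (1:ℝ) ≤ p.eval (max y z) := hz _ (le_max_right _ _)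
  have hcont : ContinuousOn (fun x => p.eval x) (Set.Icc y (max y z)) := p.continuousOn
  have h0 : (0:ℝ) ∈ Set.Icc (p.eval y) (p.eval (max y z)) := ⟨h, by linarith⟩
  obtain ⟨r, hr, hr0⟩ := intermediate_value_Icc hyz hcont h0
  exact absurd (hroots r hr0) (by linarith [hr.1])

end S9

namespace S9B
open S9

variable {k : ℕ}

lemma evF3 (n : ℕ) (x : ℝ) : (Fpoly k (n+3)).eval x
    = x * (Fpoly k (n+2)).eval x - ((k:ℝ)-1) * (Fpoly k (n+1)).eval x := by
  rw [F_rec]; simp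

lemma evG (n : ℕ) (x : ℝ) : (Gpoly k (n+2)).eval x
    = x * (Gpoly k (n+1)).eval x - ((k:ℝ)-1) * (Gpoly k n).eval x := by
  rw [G_rec]; simp

lemma evGsucc (n : ℕ) (x : ℝ) : (Gpoly k (n+1)).eval x
    = (Gpoly k n).eval x + (Fpoly k (n+1)).eval x := by
  rw [G_succ]; simp

lemma evF0 (x : ℝ) : (Fpoly k 0).eval x = 1 := by simp [F_zero]
lemma evF1 (x : ℝ) : (Fpoly k 1).eval x = x := by simp [F_one]
lemma evF2 (x : ℝ) : (Fpoly k 2).eval x = x^2 - k := by simp [F_two]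
lemma evG0 (x : ℝ) : (Gpoly k 0).eval x = 1 := by simp [G_zero]
lemma evG1 (x : ℝ) : (Gpoly k 1).eval x = 1 + x := by simp [G_one]
lemma evG2 (x : ℝ) : (Gpoly k 2).eval x = 1 + x + (x^2 - k) := by simp [G_two]

lemma chain (hk : 3 ≤ k) {x : ℝ} (hx : (k:ℝ) ≤ x) (n : ℕ) :
    1 ≤ (Fpoly k n).eval x ∧ (Fpoly k n).eval x + 1 ≤ (Fpoly k (n+1)).eval x := by
  have hk3 : (3:ℝ) ≤ (k:ℝ) := by exact_mod_cast hk
  induction n with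
  | zero =>
    constructor
    · rw [evF0]
    · show (Fpoly k 0).eval x + 1 ≤ (Fpoly k 1).eval x
      rw [evF0, evF1]; linarith
  | succ n ih =>
    obtain ⟨ih1, ih2⟩ := ih
    have goal2 : (Fpoly k (n+1)).eval x + 1 ≤ (Fpoly k (n+2)).eval x := by
      match n with
      | 0 =>
        show (Fpoly k 1).eval x + 1 ≤ (Fpoly k 2).eval x
        rw [evF1, evF2]; nlinarith
      | Nat.succ m =>
        show (Fpoly k (m+2)).eval x + 1 ≤ (Fpoly k (m+3)).eval x
        rw [evF3 m x]
        have ih1' : 1 ≤ (Fpoly k (m+1)).eval x := ih1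
        have ih2' : (Fpoly k (m+1)).eval x + 1 ≤ (Fpoly k (m+2)).eval x := ih2
        have h1 : ((k:ℝ)-1) * (Fpoly k (m+2)).eval x ≤ (x-1) * (Fpoly k (m+2)).eval x :=
          mul_le_mul_of_nonneg_right (by linarith) (by linarith)
        have h2 : ((k:ℝ)-1) * 1 ≤ ((k:ℝ)-1) *
            ((Fpoly k (m+2)).eval x - (Fpoly k (m+1)).eval x) :=
          mul_le_mul_of_nonneg_left (by linarith) (by linarith)
        nlinarith [h1, h2]
    exact ⟨by linarith, goal2⟩

lemma F_pos_ge (hk : 3 ≤ k) {x : ℝ} (hx : (k:ℝ) ≤ x) (n : ℕ) : 0 < (Fpoly k n).eval x := by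
  linarith [(chain hk hx n).1]

lemma G_pos_ge (hk : 3 ≤ k) {x : ℝ} (hx : (k:ℝ) ≤ x) (n : ℕ) : 0 < (Gpoly k n).eval x := by
  rw [Gpoly, eval_finset_sum]
  exact Finset.sum_pos (fun j _ => F_pos_ge hk hx j) (by simp)

lemma F_parity (n : ℕ) (x : ℝ) : (Fpoly k n).eval (-x) = (-1)^n * (Fpoly k n).eval x := by
  induction n using Nat.strong_induction_on with
  | _ n ih =>
    match n with
    | 0 => rw [evF0, evF0]; norm_num
    | 1 => rw [evF1, evF1]; ring
    | 2 => rw [evF2, evF2]; ring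
    | (m+3) =>
      rw [evF3 m (-x), evF3 m x, ih (m+2) (by omega), ih (m+1) (by omega)]
      ring

lemma G_alt (hk : 3 ≤ k) {x : ℝ} (hx : (k:ℝ) ≤ x) (n : ℕ) :
    0 < (-1)^n * (Gpoly k n).eval (-x) ∧
      (-1)^n * (Gpoly k n).eval (-x) ≤ (Fpoly k n).eval x := by
  induction n with
  | zero => rw [evG0, evF0]; norm_num
  | succ n ih =>
    obtain ⟨ih1, ih2⟩ := ih
    have hsq : ((-1:ℝ))^(n+1) * ((-1:ℝ))^(n+1) = 1 := by
      rw [← mul_pow]; norm_num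
    have hstep : (-1:ℝ)^(n+1) * (Gpoly k (n+1)).eval (-x)
        = -((-1:ℝ)^n * (Gpoly k n).eval (-x)) + (Fpoly k (n+1)).eval x := by
      rw [evGsucc n (-x), F_parity (n+1) x, mul_add]
      have h1 : (-1:ℝ)^(n+1) = (-1)^n * (-1) := by rw [pow_succ]
      calc (-1:ℝ)^(n+1) * (Gpoly k n).eval (-x)
            + (-1:ℝ)^(n+1) * ((-1)^(n+1) * (Fpoly k (n+1)).eval x)
          = ((-1:ℝ)^n * (-1)) * (Gpoly k n).eval (-x)
            + ((-1:ℝ)^(n+1) * (-1:ℝ)^(n+1)) * (Fpoly k (n+1)).eval x := by rw [h1]; ring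
        _ = -((-1:ℝ)^n * (Gpoly k n).eval (-x)) + (Fpoly k (n+1)).eval x := by rw [hsq]; ring
    have hch := chain hk hx n
    constructor
    · rw [hstep]; linarith [hch.1, hch.2]
    · rw [hstep]; linarith [hch.1, hch.2]

lemma F_root_bound (hk : 3 ≤ k) {n : ℕ} {x : ℝ} (h : (Fpoly k n).IsRoot x) :
    -(k:ℝ) < x ∧ x < k := by
  constructor
  · by_contra hc
    push_neg at hc
    have hx : (k:ℝ) ≤ -x := by linarith
    have hpar := F_parity (k := k) n (-x)
    rw [neg_neg] at hpar
    have hpos := F_pos_ge hk hx n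
    have : (Fpoly k n).eval x ≠ 0 := by
      rw [hpar]
      rcases Nat.even_or_odd n with he | ho
      · rw [he.neg_one_pow, one_mul]; exact hpos.ne'
      · rw [ho.neg_one_pow]
        exact ne_of_lt (by nlinarith)
    exact this h
  · by_contra hc
    push_neg at hc
    exact absurd h (F_pos_ge hk hc n).ne'

lemma G_root_bound (hk : 3 ≤ k) {n : ℕ} {x : ℝ} (h : (Gpoly k n).IsRoot x) :
    -(k:ℝ) < x ∧ x < k := by
  constructor
  · by_contra hc
    push_neg at hc
    have hx : (k:ℝ) ≤ -x := by linarith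
    have halt := (G_alt hk hx n).1
    rw [neg_neg] at halt
    have : (Gpoly k n).eval x ≠ 0 := by
      intro hz; rw [hz, mul_zero] at halt; exact lt_irrefl 0 halt
    exact this h
  · by_contra hc
    push_neg at hc
    exact absurd h (G_pos_ge hk hc n).ne'

lemma cas (n : ℕ) (x : ℝ) :
    (Fpoly k (n+2)).eval x * (Gpoly k (n+1)).eval x
      - (Fpoly k (n+1)).eval x * (Gpoly k (n+2)).eval x
    = -(((k:ℝ)-1)^n) * (x + k) := by
  induction n with
  | zero =>
    rw [evF1, evF2, evG1, evG2]; ring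
  | succ n ih =>
    have hfr := evF3 (k := k) n x
    have hgr := evG (k := k) (n+1) x
    calc (Fpoly k (n+3)).eval x * (Gpoly k (n+2)).eval x
        - (Fpoly k (n+2)).eval x * (Gpoly k (n+3)).eval x
        = ((k:ℝ)-1) * ((Fpoly k (n+2)).eval x * (Gpoly k (n+1)).eval x
            - (Fpoly k (n+1)).eval x * (Gpoly k (n+2)).eval x) := by
          rw [hfr, hgr]; ring
      _ = -(((k:ℝ)-1)^(n+1)) * (x + k) := by rw [ih]; ring

lemma KIe (n : ℕ) (x : ℝ) :
    (Fpoly k (n+2)).eval x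
      = ((k:ℝ)-1) * (Fpoly k (n+1)).eval x + (x - k) * (Gpoly k (n+1)).eval x := by
  induction n using Nat.strong_induction_on with
  | _ n ih =>
    match n with
    | 0 =>
      rw [evF1, evF2, evG1]; ring
    | 1 =>
      have h3 := evF3 (k := k) 0 x
      rw [show (0:ℕ)+3 = 3 from rfl, show (0:ℕ)+2 = 2 from rfl, show (0:ℕ)+1 = 1 from rfl] at h3
      show (Fpoly k 3).eval x = _
      rw [h3, evF1, evF2, evG2]; ring
    | (m+2) =>
      have hih1 := ih (m+1) (by omega)
      have hih0 := ih m (by omega)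
      have hfr1 := evF3 (k := k) (m+1) x
      have hfrm := evF3 (k := k) m x
      have hgr := evG (k := k) (m+1) x
      linear_combination hfr1 + x * hih1 + ((k:ℝ) - x) * hgr + (1 - (k:ℝ)) * hih0 + (1 - (k:ℝ)) * hfrm

end S9B

namespace S9C
open S9 S9B

variable {k : ℕ}

/-- Wronskian `W_{m+2} = F_{m+2}' F_{m+1} - F_{m+1}' F_{m+2}`. -/
noncomputable def Wp (k m : ℕ) : Polynomial ℝ :=
  (Fpoly k (m+2)).derivative * Fpoly k (m+1) - (Fpoly k (m+1)).derivative * Fpoly k (m+2)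

lemma W_base : Wp k 0 = X^2 + C (k:ℝ) := by
  unfold Wp
  rw [F_two, F_one]
  simp only [derivative_sub, derivative_X_pow, derivative_C, derivative_X]
  rw [C_eq_natCast]
  push_cast
  ring

lemma W_rec (m : ℕ) : Wp k (m+1) = (Fpoly k (m+2))^2 + C ((k:ℝ)-1) * Wp k m := by
  unfold Wp
  rw [F_rec m]
  simp only [derivative_sub, derivative_mul, derivative_X, derivative_C]
  ring

lemma W_pos (hk : 3 ≤ k) (m : ℕ) (x : ℝ) : 0 < (Wp k m).eval x := by
  have hk3 : (3:ℝ) ≤ (k:ℝ) := by exact_mod_cast hk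
  induction m with
  | zero => rw [W_base]; simp; nlinarith [sq_nonneg x]
  | succ m ih =>
    rw [W_rec]
    simp only [eval_add, eval_mul, eval_pow, eval_C]
    nlinarith [sq_nonneg ((Fpoly k (m+2)).eval x)]

lemma evW (m : ℕ) (x : ℝ) : (Wp k m).eval x
    = (Fpoly k (m+2)).derivative.eval x * (Fpoly k (m+1)).eval x
      - (Fpoly k (m+1)).derivative.eval x * (Fpoly k (m+2)).eval x := by
  unfold Wp; simp

/-- polynomial-level key identity -/
lemma KI (n : ℕ) : Fpoly k (n+2)
    = C ((k:ℝ)-1) * Fpoly k (n+1) + (X - C (k:ℝ)) * Gpoly k (n+1) := by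
  induction n using Nat.strong_induction_on with
  | _ n ih =>
    match n with
    | 0 =>
      rw [F_two, F_one, G_one]
      simp only [map_sub, map_one]
      ring
    | 1 =>
      have h3 := F_rec (k := k) 0
      rw [show (0:ℕ)+3 = 3 from rfl, show (0:ℕ)+2 = 2 from rfl, show (0:ℕ)+1 = 1 from rfl] at h3
      show Fpoly k 3 = _
      rw [h3, F_two, F_one, G_two]
      simp only [map_sub, map_one]
      ring
    | (m+2) =>
      have hih1 := ih (m+1) (by omega)
      have hih0 := ih m (by omega)
      have hfr1 := F_rec (k := k) (m+1)
      have hfrm := F_rec (k := k) m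
      have hgr := G_rec (k := k) (m+1)
      simp only [map_sub, map_one] at hih1 hih0 hfr1 hfrm hgr ⊢
      linear_combination hfr1 + X * hih1 + (C (k:ℝ) - X) * hgr
        + (1 - C (k:ℝ)) * hih0 + (1 - C (k:ℝ)) * hfrm

/-- `W_{m+2} = F_{m+1} G_{m+1} - (X - k) V_{m+1}` -/
lemma WV (m : ℕ) : Wp k m
    = Fpoly k (m+1) * Gpoly k (m+1)
      - (X - C (k:ℝ)) * ((Fpoly k (m+1)).derivative * Gpoly k (m+1)
          - (Gpoly k (m+1)).derivative * Fpoly k (m+1)) := by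
  unfold Wp
  rw [KI m]
  simp only [derivative_add, derivative_mul, derivative_sub, derivative_X, derivative_C]
  ring

lemma WV_eval (m : ℕ) (x : ℝ) :
    ((Fpoly k (m+1)).derivative.eval x * (Gpoly k (m+1)).eval x
        - (Gpoly k (m+1)).derivative.eval x * (Fpoly k (m+1)).eval x) * (x - k)
    = (Fpoly k (m+1)).eval x * (Gpoly k (m+1)).eval x - (Wp k m).eval x := by
  have h := congrArg (eval x) (WV (k := k) m)
  simp only [eval_sub, eval_mul, eval_add, eval_X, eval_C] at h
  linarith [h]

/-- positivity of the mixed Wronskian V where f < 0 < g and x < k -/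
lemma V_pos (hk : 3 ≤ k) (m : ℕ) {x : ℝ} (hxk : x < k)
    (hf : (Fpoly k (m+1)).eval x < 0) (hg : 0 < (Gpoly k (m+1)).eval x) :
    0 < (Fpoly k (m+1)).derivative.eval x * (Gpoly k (m+1)).eval x
      - (Gpoly k (m+1)).derivative.eval x * (Fpoly k (m+1)).eval x := by
  have h := WV_eval (k := k) m x
  have hW := W_pos hk m x
  nlinarith [mul_neg_of_neg_of_pos hf hg]

end S9C

namespace S9D
open S9 S9B S9C

variable {k : ℕ}

lemma factor_deriv {p : Polynomial ℝ} {r : ℝ} (h : p.IsRoot r) :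
    (X - C r) * (p /ₘ (X - C r)) = p ∧ (p /ₘ (X - C r)).eval r = p.derivative.eval r := by
  have hf := (mul_divByMonic_eq_iff_isRoot (p := p) (a := r)).2 h
  refine ⟨hf, ?_⟩
  have hd : p.derivative = (X - C r) * (p /ₘ (X - C r)).derivative + (p /ₘ (X - C r)) := by
    conv_lhs => rw [← hf]
    rw [derivative_mul, derivative_sub, derivative_X, derivative_C]
    ring
  rw [hd]
  simp

lemma exists_root_between {q : Polynomial ℝ} {a b : ℝ} (hab : a ≤ b)
    (ha : q.eval a ≤ 0) (hb : 0 < q.eval b) : ∃ s, a ≤ s ∧ s < b ∧ q.IsRoot s := by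
  obtain ⟨s, hs, hs0⟩ := intermediate_value_Icc hab q.continuousOn ⟨ha, le_of_lt hb⟩
  refine ⟨s, hs.1, ?_, hs0⟩
  rcases eq_or_lt_of_le hs.2 with h | h
  · exact absurd (h ▸ hs0) hb.ne'
  · exact h

lemma nonneg_left_of_pos {q : Polynomial ℝ} {r b : ℝ} (hrb : r < b)
    (hpos : ∀ y, r < y → y < b → 0 ≤ q.eval y) : 0 ≤ q.eval r := by
  have ht : Filter.Tendsto (fun x => q.eval x) (nhdsWithin r (Set.Ioi r)) (nhds (q.eval r)) :=
    q.continuous.continuousAt.continuousWithinAt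
  refine ge_of_tendsto ht ?_
  filter_upwards [Ioo_mem_nhdsGT_of_mem (Set.mem_Ico.2 ⟨le_refl r, hrb⟩)] with y hy
  exact hpos y hy.1 hy.2

lemma nonpos_left_of_neg {q : Polynomial ℝ} {r b : ℝ} (hrb : r < b)
    (hneg : ∀ y, r < y → y < b → q.eval y ≤ 0) : q.eval r ≤ 0 := by
  have := nonneg_left_of_pos (q := -q) hrb (fun y h1 h2 => by
    simp only [eval_neg]; linarith [hneg y h1 h2])
  simpa using this

lemma stepA (hk : 3 ≤ k) (m : ℕ) {lamt1 mut1 : ℝ}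
    (hlam : (Gpoly k (m+2)).IsRoot lamt1)
    (hlmax : ∀ x : ℝ, (Gpoly k (m+2)).IsRoot x → x ≤ lamt1)
    (hmu : (Fpoly k (m+2)).IsRoot mut1)
    (hmmax : ∀ x : ℝ, (Fpoly k (m+2)).IsRoot x → x ≤ mut1) :
    ∀ x : ℝ, lamt1 ≤ x → x < mut1 → (Fpoly k (m+2)).eval x < 0 := by
  have hk1 : (1:ℝ) < (k:ℝ) := by
    have : (3:ℝ) ≤ (k:ℝ) := by exact_mod_cast hk
    linarith
  have hGm := G_monic (k := k) (m+2)
  have hFm := F_monic (k := k) (m+2)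
  have hGpos : ∀ y, lamt1 < y → 0 < (Gpoly k (m+2)).eval y := fun y hy =>
    pos_of_gt_roots hGm.1 (by rw [hGm.2]; omega) hlmax hy
  have hFposgt : ∀ y, mut1 < y → 0 < (Fpoly k (m+2)).eval y := fun y hy =>
    pos_of_gt_roots hFm.1 (by rw [hFm.2]; omega) hmmax hy
  have hlmk : -(k:ℝ) < lamt1 := (G_root_bound hk hlam).1
  obtain ⟨hfact, hqd⟩ := factor_deriv hmu
  set q := Fpoly k (m+2) /ₘ (X - C mut1) with hqdef
  have hqgt : ∀ y, mut1 < y → 0 < q.eval y := by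
    intro y hy
    have h1 := hFposgt y hy
    rw [← hfact] at h1
    simp only [eval_mul, eval_sub, eval_X, eval_C] at h1
    nlinarith
  have hq0 : 0 ≤ q.eval mut1 :=
    nonneg_left_of_pos (b := mut1 + 1) (by linarith)
      (fun y h1 _ => le_of_lt (hqgt y h1))
  have hWmu := W_pos hk m mut1
  rw [evW, hmu.eq_zero] at hWmu
  have hqmu : 0 < q.eval mut1 := by
    rcases lt_or_eq_of_le hq0 with h | h
    · exact h
    · exfalso; rw [← hqd, ← h] at hWmu; simp at hWmu
  -- central claim: no root of F in [lamt1, mut1)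
  have hnoroot : ∀ r, lamt1 ≤ r → r < mut1 → ¬ (Fpoly k (m+2)).IsRoot r := by
    intro r₀ hr₀1 hr₀2 hr₀root
    set S := (Fpoly k (m+2)).roots.toFinset.filter
        (fun s => lamt1 ≤ s ∧ s < mut1) with hSdef
    have hr₀S : r₀ ∈ S := by
      rw [hSdef]
      simp only [Finset.mem_filter, Multiset.mem_toFinset, mem_roots', ne_eq]
      exact ⟨⟨hFm.1.ne_zero, hr₀root⟩, hr₀1, hr₀2⟩
    have hne : S.Nonempty := ⟨r₀, hr₀S⟩
    set r := S.max' hne with hrdef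
    have hrS : r ∈ S := S.max'_mem hne
    rw [hSdef] at hrS
    simp only [Finset.mem_filter, Multiset.mem_toFinset, mem_roots', ne_eq] at hrS
    obtain ⟨⟨-, hrroot⟩, hr1, hr2⟩ := hrS
    have hnorootmid : ∀ s, r < s → s < mut1 → ¬ (Fpoly k (m+2)).IsRoot s := by
      intro s hs1 hs2 hsroot
      have hsS : s ∈ S := by
        rw [hSdef]
        simp only [Finset.mem_filter, Multiset.mem_toFinset, mem_roots', ne_eq]
        exact ⟨⟨hFm.1.ne_zero, hsroot⟩, le_trans hr1 (le_of_lt hs1), hs2⟩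
      exact absurd (S.le_max' s hsS) (not_le.2 hs1)
    have hqmid : ∀ y, r < y → y ≤ mut1 → 0 < q.eval y := by
      intro y hy1 hy2
      rcases eq_or_lt_of_le hy2 with rfl | hy2'
      · exact hqmu
      · by_contra hc
        push_neg at hc
        obtain ⟨s, hs1, hs2, hsroot⟩ := exists_root_between (le_of_lt hy2') hc hqmu
        have hFs : (Fpoly k (m+2)).IsRoot s := by
          rw [IsRoot, ← hfact]
          simp only [eval_mul, eval_sub, eval_X, eval_C, hsroot.eq_zero, mul_zero]
        exact hnorootmid s (lt_of_lt_of_le hy1 hs1) hs2 hFs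
    have hFmid : ∀ y, r < y → y < mut1 → (Fpoly k (m+2)).eval y < 0 := by
      intro y hy1 hy2
      have hq := hqmid y hy1 (le_of_lt hy2)
      rw [← hfact]
      simp only [eval_mul, eval_sub, eval_X, eval_C]
      nlinarith
    obtain ⟨hfact1, hqd1⟩ := factor_deriv hrroot
    set q1 := Fpoly k (m+2) /ₘ (X - C r) with hq1def
    have hq1neg : ∀ y, r < y → y < mut1 → q1.eval y ≤ 0 := by
      intro y h1 h2
      have hF := hFmid y h1 h2
      rw [← hfact1] at hF
      simp only [eval_mul, eval_sub, eval_X, eval_C] at hF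
      nlinarith
    have hq1r : q1.eval r ≤ 0 := nonpos_left_of_neg hr2 hq1neg
    have hWr := W_pos hk m r
    rw [evW, hrroot.eq_zero] at hWr
    -- hWr : 0 < dF(r) * f_{m+1}(r) - dF_{m+1}(r) * 0
    rw [← hqd1] at hWr
    have hFm1neg : (Fpoly k (m+1)).eval r < 0 := by
      rcases lt_or_eq_of_le hq1r with h | h
      · by_contra hcc
        push_neg at hcc
        nlinarith [mul_nonneg hcc (neg_nonneg.2 h.le)]
      · exfalso; rw [h] at hWr; simp at hWr
    have hcas := cas (k := k) m r
    rw [hrroot.eq_zero] at hcas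
    have hrk : 0 < r + (k:ℝ) := by linarith
    have hpow : 0 < ((k:ℝ)-1)^m := pow_pos (by linarith) m
    have hgr : 0 ≤ (Gpoly k (m+2)).eval r := by
      rcases eq_or_lt_of_le hr1 with h | h
      · rw [← h, hlam.eq_zero]
      · exact le_of_lt (hGpos r h)
    nlinarith [mul_nonneg (neg_nonneg.2 hFm1neg.le) hgr, mul_pos hpow hrk]
  -- conclude
  intro x hx1 hx2
  have hqall : 0 < q.eval x := by
    by_contra hc
    push_neg at hc
    obtain ⟨s, hs1, hs2, hsroot⟩ := exists_root_between (le_of_lt hx2) hc hqmu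
    have hFs : (Fpoly k (m+2)).IsRoot s := by
      rw [IsRoot, ← hfact]
      simp only [eval_mul, eval_sub, eval_X, eval_C, hsroot.eq_zero, mul_zero]
    exact hnoroot s (le_trans hx1 hs1) hs2 hFs
  rw [← hfact]
  simp only [eval_mul, eval_sub, eval_X, eval_C]
  nlinarith

end S9D

namespace S9E
open S9 S9B S9C S9D

variable {k : ℕ}

lemma mono (hk : 3 ≤ k) (m : ℕ) {lamt1 mut1 lam : ℝ}
    (hlam : (Gpoly k (m+2)).IsRoot lamt1)
    (hlmax : ∀ x : ℝ, (Gpoly k (m+2)).IsRoot x → x ≤ lamt1)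
    (hmu : (Fpoly k (m+2)).IsRoot mut1)
    (hmmax : ∀ x : ℝ, (Fpoly k (m+2)).IsRoot x → x ≤ mut1)
    (h1 : lamt1 < lam) (h2 : lam < mut1) :
    StrictMonoOn (fun x => (Fpoly k (m+2)).eval x / (Gpoly k (m+2)).eval x)
      (Set.Icc lam mut1) := by
  have hGm := G_monic (k := k) (m+2)
  have hGpos : ∀ y ∈ Set.Icc lam mut1, 0 < (Gpoly k (m+2)).eval y := fun y hy =>
    pos_of_gt_roots hGm.1 (by rw [hGm.2]; omega) hlmax (lt_of_lt_of_le h1 hy.1)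
  have hmuk : mut1 < (k:ℝ) := (F_root_bound hk hmu).2
  apply strictMonoOn_of_deriv_pos (convex_Icc _ _)
  · exact ContinuousOn.div (Polynomial.continuousOn _) (Polynomial.continuousOn _)
      (fun y hy => (hGpos y hy).ne')
  · intro x hx
    rw [interior_Icc] at hx
    have hgx := hGpos x ⟨hx.1.le, hx.2.le⟩
    have hD : HasDerivAt (fun y => (Fpoly k (m+2)).eval y / (Gpoly k (m+2)).eval y)
        (((Fpoly k (m+2)).derivative.eval x * (Gpoly k (m+2)).eval x -
          (Fpoly k (m+2)).eval x * (Gpoly k (m+2)).derivative.eval x)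
            / ((Gpoly k (m+2)).eval x)^2) x :=
      ((Fpoly k (m+2)).hasDerivAt x).div ((Gpoly k (m+2)).hasDerivAt x) hgx.ne'
    rw [hD.deriv]
    apply div_pos
    · have hV := V_pos hk (m+1) (x := x) (lt_trans hx.2 hmuk)
        (stepA hk m hlam hlmax hmu hmmax x (le_of_lt (lt_trans h1 hx.1)) hx.2) hgx
      linarith [hV]
    · positivity

end S9E

theorem stmt9 (k t : ℕ) (hk : 3 ≤ k) (ht : 3 ≤ t) (lam lamt1 mut1 : ℝ)
    (hlamt1 : (Gpoly k (t - 1)).IsRoot lamt1)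
    (hlamt1max : ∀ x : ℝ, (Gpoly k (t - 1)).IsRoot x → x ≤ lamt1)
    (hmut1 : (Fpoly k (t - 1)).IsRoot mut1)
    (hmut1max : ∀ x : ℝ, (Fpoly k (t - 1)).IsRoot x → x ≤ mut1)
    (h1 : lamt1 < lam) (h2 : lam < mut1) :
    ∃ c₁ c₂ : ℝ,
      c₁ = -(Fpoly k (t - 1)).eval lam / (Gpoly k (t - 2)).eval lam ∧
      c₂ = -(Fpoly k t).eval lam / (Gpoly k (t - 1)).eval lam ∧
      0 < c₁ ∧ c₁ < 1 ∧ 0 < c₂ ∧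
      ((C (c₁ - 1) * Gpoly k (t - 2) + Gpoly k (t - 1)).IsRoot lam ∧
        ∀ x : ℝ, (C (c₁ - 1) * Gpoly k (t - 2) + Gpoly k (t - 1)).IsRoot x → x ≤ lam) ∧
      ((C (c₂ - 1) * Gpoly k (t - 1) + Gpoly k t).IsRoot lam ∧
        ∀ x : ℝ, (C (c₂ - 1) * Gpoly k (t - 1) + Gpoly k t).IsRoot x → x ≤ lam) ∧
      Mbound k (t + 1) c₂ < Mbound k t c₁ := by
  obtain ⟨τ, rfl⟩ : ∃ τ, t = τ + 3 := ⟨t - 3, by omega⟩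
  have e1 : τ + 3 - 1 = τ + 2 := rfl
  have e2 : τ + 3 - 2 = τ + 1 := rfl
  rw [e1] at hlamt1 hlamt1max hmut1 hmut1max
  rw [e1, e2]
  have hkR : (3:ℝ) ≤ (k:ℝ) := by exact_mod_cast hk
  have hGm := S9.G_monic (k := k) (τ+2)
  have hFm := S9.F_monic (k := k) (τ+2)
  have hGpos : ∀ y, lamt1 < y → 0 < (Gpoly k (τ+2)).eval y := fun y hy =>
    S9.pos_of_gt_roots hGm.1 (by rw [hGm.2]; omega) hlamt1max hy
  have hFgt : ∀ y, mut1 < y → 0 < (Fpoly k (τ+2)).eval y := fun y hy =>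
    S9.pos_of_gt_roots hFm.1 (by rw [hFm.2]; omega) hmut1max hy
  have hFge : ∀ y, mut1 ≤ y → 0 ≤ (Fpoly k (τ+2)).eval y := by
    intro y hy
    rcases eq_or_lt_of_le hy with rfl | hy'
    · rw [hmut1.eq_zero]
    · exact le_of_lt (hFgt y hy')
  have hfneg := S9D.stepA hk τ hlamt1 hlamt1max hmut1 hmut1max
  have hflam : (Fpoly k (τ+2)).eval lam < 0 := hfneg lam h1.le h2
  have hglam : 0 < (Gpoly k (τ+2)).eval lam := hGpos lam h1
  have hg'def : (Gpoly k (τ+2)).eval lam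
      = (Gpoly k (τ+1)).eval lam + (Fpoly k (τ+2)).eval lam := S9B.evGsucc (τ+1) lam
  have hg'lam : 0 < (Gpoly k (τ+1)).eval lam := by linarith
  have hmuk : mut1 < (k:ℝ) := (S9B.F_root_bound hk hmut1).2
  have hlamk : lam < (k:ℝ) := lt_trans h2 hmuk
  have hKIl : (Fpoly k (τ+3)).eval lam
      = ((k:ℝ)-1) * (Fpoly k (τ+2)).eval lam + (lam - (k:ℝ)) * (Gpoly k (τ+2)).eval lam :=
    S9B.KIe (τ+1) lam
  have hftlam : (Fpoly k (τ+3)).eval lam < 0 := by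
    have e1' : ((k:ℝ)-1) * (Fpoly k (τ+2)).eval lam < 0 :=
      mul_neg_of_pos_of_neg (by linarith) hflam
    have e2' : (lam - (k:ℝ)) * (Gpoly k (τ+2)).eval lam < 0 :=
      mul_neg_of_neg_of_pos (by linarith) hglam
    rw [hKIl]; linarith
  set fl := (Fpoly k (τ+2)).eval lam with hfl
  set gl := (Gpoly k (τ+2)).eval lam with hgl
  set g'l := (Gpoly k (τ+1)).eval lam with hg'l
  set ftl := (Fpoly k (τ+3)).eval lam with hftl
  set c₁ := -fl / g'l with hc₁
  set c₂ := -ftl / gl with hc₂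
  have hc₁pos : 0 < c₁ := div_pos (by linarith) hg'lam
  have hc₁lt : c₁ < 1 := by rw [hc₁, div_lt_one hg'lam]; linarith
  have hc₂pos : 0 < c₂ := div_pos (by linarith) hglam
  have hmono := S9E.mono hk τ hlamt1 hlamt1max hmut1 hmut1max h1 h2
  have hkey : ∀ x, lam < x → x < mut1 →
      fl * (Gpoly k (τ+2)).eval x < (Fpoly k (τ+2)).eval x * gl := by
    intro x hx1 hx2
    have hm := hmono (Set.mem_Icc.2 ⟨le_refl lam, h2.le⟩)
      (Set.mem_Icc.2 ⟨hx1.le, hx2.le⟩) hx1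
    have hgx : 0 < (Gpoly k (τ+2)).eval x := hGpos x (lt_trans h1 hx1)
    simp only at hm
    rw [div_lt_div_iff₀ hglam hgx] at hm
    linarith [hm]
  have hB : ∀ x, lam < x →
      0 < (-fl/gl) * (Gpoly k (τ+2)).eval x + (Fpoly k (τ+2)).eval x := by
    intro x hx
    rcases lt_or_ge x mut1 with hxm | hxm
    · have hgx : 0 < (Gpoly k (τ+2)).eval x := hGpos x (lt_trans h1 hx)
      have hk2 := hkey x hx hxm
      have heq : (-fl/gl) * (Gpoly k (τ+2)).eval x + (Fpoly k (τ+2)).eval x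
          = ((Fpoly k (τ+2)).eval x * gl - fl * (Gpoly k (τ+2)).eval x) / gl := by
        field_simp
        ring
      rw [heq]
      exact div_pos (by linarith) hglam
    · have hgx : 0 < (Gpoly k (τ+2)).eval x := hGpos x (by linarith)
      have hfx := hFge x hxm
      have h5 : 0 < (-fl/gl) * (Gpoly k (τ+2)).eval x :=
        mul_pos (div_pos (by linarith) hglam) hgx
      linarith
  have hev1 : ∀ x : ℝ, (C (c₁ - 1) * Gpoly k (τ+1) + Gpoly k (τ+2)).eval x
      = c₁ * (Gpoly k (τ+2)).eval x + (1 - c₁) * (Fpoly k (τ+2)).eval x := by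
    intro x
    simp only [eval_add, eval_mul, eval_C]
    linear_combination (1 - c₁) * (S9B.evGsucc (k := k) (τ+1) x)
  have hroot1 : (C (c₁ - 1) * Gpoly k (τ+1) + Gpoly k (τ+2)).IsRoot lam := by
    rw [IsRoot, hev1 lam, ← hgl, ← hfl, hc₁]
    field_simp
    linear_combination (-fl) * hg'def
  have hmax1 : ∀ x : ℝ, (C (c₁ - 1) * Gpoly k (τ+1) + Gpoly k (τ+2)).IsRoot x → x ≤ lam := by
    intro x hx
    by_contra hc
    push_neg at hc
    have hgeq' : g'l = gl - fl := by linarith [hg'def]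
    have hgfne : gl - fl ≠ 0 := by rw [← hgeq']; exact hg'lam.ne'
    have hpos : 0 < (C (c₁ - 1) * Gpoly k (τ+1) + Gpoly k (τ+2)).eval x := by
      rw [hev1 x]
      rcases lt_or_ge x mut1 with hxm | hxm
      · have hgx : 0 < (Gpoly k (τ+2)).eval x := hGpos x (lt_trans h1 hc)
        have hk2 := hkey x hc hxm
        have heq : c₁ * (Gpoly k (τ+2)).eval x + (1 - c₁) * (Fpoly k (τ+2)).eval x
            = ((Fpoly k (τ+2)).eval x * gl - fl * (Gpoly k (τ+2)).eval x) / (gl - fl) := by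
          rw [hc₁, hgeq']
          field_simp
          ring
        rw [heq]
        apply div_pos (by linarith)
        rw [← hgeq']
        exact hg'lam
      · have hgx : 0 < (Gpoly k (τ+2)).eval x := hGpos x (by linarith)
        have hfx := hFge x hxm
        have h5 : 0 < c₁ * (Gpoly k (τ+2)).eval x := mul_pos hc₁pos hgx
        have h6 : 0 ≤ (1 - c₁) * (Fpoly k (τ+2)).eval x :=
          mul_nonneg (by linarith) hfx
        linarith
    exact hpos.ne' hx
  have hev2 : ∀ x : ℝ, (C (c₂ - 1) * Gpoly k (τ+2) + Gpoly k (τ+3)).eval x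
      = (x - lam) * (Gpoly k (τ+2)).eval x
        + ((k:ℝ) - 1) * ((-fl/gl) * (Gpoly k (τ+2)).eval x + (Fpoly k (τ+2)).eval x) := by
    intro x
    simp only [eval_add, eval_mul, eval_C]
    have hKIx : (Fpoly k (τ+3)).eval x
        = ((k:ℝ)-1) * (Fpoly k (τ+2)).eval x + (x - (k:ℝ)) * (Gpoly k (τ+2)).eval x :=
      S9B.KIe (τ+1) x
    have hGx : (Gpoly k (τ+3)).eval x
        = (Gpoly k (τ+2)).eval x + (Fpoly k (τ+3)).eval x := S9B.evGsucc (τ+2) x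
    rw [hGx, hKIx, hc₂, hKIl]
    field_simp
    ring
  have hroot2 : (C (c₂ - 1) * Gpoly k (τ+2) + Gpoly k (τ+3)).IsRoot lam := by
    rw [IsRoot, hev2 lam, ← hgl, ← hfl]
    field_simp
    ring
  have hmax2 : ∀ x : ℝ, (C (c₂ - 1) * Gpoly k (τ+2) + Gpoly k (τ+3)).IsRoot x → x ≤ lam := by
    intro x hx
    by_contra hc
    push_neg at hc
    have hgx : 0 < (Gpoly k (τ+2)).eval x := hGpos x (lt_trans h1 hc)
    have hpos : 0 < (C (c₂ - 1) * Gpoly k (τ+2) + Gpoly k (τ+3)).eval x := by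
      rw [hev2 x]
      have hB' := hB x hc
      have h7 : 0 < (x - lam) * (Gpoly k (τ+2)).eval x := mul_pos (by linarith) hgx
      have h8 : 0 < ((k:ℝ) - 1) *
          ((-fl/gl) * (Gpoly k (τ+2)).eval x + (Fpoly k (τ+2)).eval x) :=
        mul_pos (by linarith) hB'
      linarith
    exact hpos.ne' hx
  have hMb : Mbound k (τ+3+1) c₂ < Mbound k (τ+3) c₁ := by
    have hgeq' : g'l = gl - fl := by linarith [hg'def]
    have hgfne : gl - fl ≠ 0 := by rw [← hgeq']; exact hg'lam.ne'
    have hkeyM : 0 < 1/c₁ - 1 - ((k:ℝ)-1)/c₂ := by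
      have heq : 1/c₁ - 1 - ((k:ℝ)-1)/c₂ = (c₂ * (1 - c₁) - ((k:ℝ)-1) * c₁) / (c₁ * c₂) := by
        field_simp
      rw [heq]
      apply div_pos _ (mul_pos hc₁pos hc₂pos)
      have heq2 : c₂ * (1 - c₁) - ((k:ℝ)-1) * c₁ = ((k:ℝ) - lam) * gl / (gl - fl) := by
        rw [hc₁, hc₂, hKIl, hgeq']
        field_simp
        ring
      rw [heq2]
      apply div_pos (mul_pos (by linarith) hglam)
      rw [← hgeq']
      exact hg'lam
    have hP : 0 < (k:ℝ) * ((k:ℝ)-1)^(τ+1) :=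
      mul_pos (by linarith) (pow_pos (by linarith) _)
    have hprod := mul_pos hP hkeyM
    simp only [Mbound]
    rw [show τ+3-2 = τ+1 from rfl, show τ+3+1-2 = τ+2 from rfl]
    rw [Finset.sum_range_succ]
    have hexp : ((k:ℝ)-1)^(τ+2) = ((k:ℝ)-1)^(τ+1) * ((k:ℝ)-1) := by ring
    rw [hexp]
    have hd1 : (k:ℝ) * ((k:ℝ)-1)^(τ+1) / c₁ = (k:ℝ) * ((k:ℝ)-1)^(τ+1) * (1/c₁) := by ring
    have hd2 : (k:ℝ) * (((k:ℝ)-1)^(τ+1) * ((k:ℝ)-1)) / c₂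
        = (k:ℝ) * ((k:ℝ)-1)^(τ+1) * (((k:ℝ)-1)/c₂) := by ring
    rw [hd1, hd2]
    nlinarith [hprod]
  exact ⟨c₁, c₂, hc₁, hc₂, hc₁pos, hc₁lt, hc₂pos, ⟨hroot1, hmax1⟩, ⟨hroot2, hmax2⟩, hMb⟩
end

section
/- Let G be a connected k-regular finite simple graph and λ a real number with λ₂(G) ≤ λ < k. Let H be a nonempty induced subgraph of G with average degree deg(H) ≥ λ, and suppose that Γ₁(H), the set of vertices at distance exactly 1 from V(H), and Γ_{≥2}(H), the set of vertices at distance at least 2 from V(H), are both nonempty. Then the subgraph K of G induced on Γ_{≥2}(H) satisfies deg(K) ≤ λ, and deg(K) = λ can hold only if deg(H) = λ₂(G) = λ. -/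
open Polynomial

/-- Average degree of the subgraph of `G` induced on a finset `S`:
twice the number of edges divided by the number of vertices. -/
noncomputable def avgDegFinset {V : Type*} [DecidableEq V] (G : SimpleGraph V)
    [DecidableRel G.Adj] (S : Finset V) : ℝ :=
  (∑ v ∈ S, ((S.filter (G.Adj v)).card : ℝ)) / S.card

instance induceDecidableRel {V : Type*} (G : SimpleGraph V) [DecidableRel G.Adj] (s : Set V) :
    DecidableRel (SimpleGraph.induce s G).Adj := fun a b => decidable_of_iff (G.Adj a b) Iff.rfl


open scoped RealInnerProductSpace Matrix in
lemma my_list_countP_le_one (l : List ℝ) (hl : l.Pairwise (· ≤ ·)) (hn : 2 ≤ l.length) :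
    l.countP (fun a => decide (l.getD (l.length - 2) 0 < a)) ≤ 1 := by
  set lam := l.getD (l.length - 2) 0 with hlam
  have h2 : l.length - 2 < l.length := by omega
  have hget : lam = l.get ⟨l.length - 2, h2⟩ := by
    rw [hlam, List.getD_eq_getElem l 0 h2]; rfl
  have hsplit := List.take_append_drop (l.length - 1) l
  calc l.countP (fun a => decide (lam < a))
      = (l.take (l.length - 1) ++ l.drop (l.length - 1)).countP (fun a => decide (lam < a)) := by
        rw [hsplit]
    _ = (l.take (l.length - 1)).countP (fun a => decide (lam < a))
        + (l.drop (l.length - 1)).countP (fun a => decide (lam < a)) := List.countP_append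
    _ ≤ 0 + 1 := by
        gcongr
        · rw [Nat.le_zero, List.countP_eq_zero]
          intro a ha
          obtain ⟨i, hi, rfl⟩ := List.getElem_of_mem ha
          have hi' : i < l.length - 1 := by
            have := List.length_take (i := l.length - 1) (l := l); omega
          rw [List.getElem_take]
          simp only [decide_eq_true_eq, not_lt, hget]
          exact hl.rel_get_of_le (by simp; omega)
        · exact le_trans List.countP_le_length (by rw [List.length_drop]; omega)
    _ ≤ 1 := by omega

lemma my_eig_count_le_one {V : Type*} [Fintype V] [DecidableEq V] (G : SimpleGraph V)
    [DecidableRel G.Adj] (hn : 2 ≤ Fintype.card V) :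
    (Finset.univ.filter fun i =>
      secondEigenvalue G < (adjMatrix_isHermitian G).eigenvalues i).card ≤ 1 := by
  classical
  have hlen : ((eigMultiset G).sort (· ≤ ·)).length = Fintype.card V := by
    rw [Multiset.length_sort, eigMultiset, Multiset.card_map]; rfl
  have h1 : (Finset.univ.filter fun i =>
      secondEigenvalue G < (adjMatrix_isHermitian G).eigenvalues i).card
      = Multiset.countP (fun a => secondEigenvalue G < a) (eigMultiset G) := by
    rw [eigMultiset, Multiset.countP_map]
    rfl
  rw [h1, ← Multiset.sort_eq (eigMultiset G) (· ≤ ·), Multiset.coe_countP]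
  have := my_list_countP_le_one ((eigMultiset G).sort (· ≤ ·))
    (Multiset.pairwise_sort _ _) (by omega)
  unfold secondEigenvalue
  convert this using 2

open scoped RealInnerProductSpace Matrix in
theorem my_quad_le {V : Type*} [Fintype V] [DecidableEq V] (G : SimpleGraph V)
    [DecidableRel G.Adj] (k : ℕ) (lam2 : ℝ)
    (hcnt : (Finset.univ.filter fun i =>
      lam2 < (adjMatrix_isHermitian G).eigenvalues i).card ≤ 1)
    (hreg : G.IsRegularOfDegree k) (hlt : lam2 < (k : ℝ))
    (x : V → ℝ) (hx : ∑ v, x v = 0) :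
    ∑ v, x v * ∑ u, (G.adjMatrix ℝ) v u * x u ≤ lam2 * ∑ v, (x v) ^ 2 := by
  classical
  rcases isEmpty_or_nonempty V with hV | hV
  · simp
  set A := G.adjMatrix ℝ with hAdef
  set hA := adjMatrix_isHermitian G with hAdef'
  set b := hA.eigenvectorBasis with hbdef
  set μ := hA.eigenvalues with hμdef
  have hinner : ∀ (u w : EuclideanSpace ℝ V), ⟪u, w⟫ = ∑ v, u v * w v := by
    intro u w; simp [PiLp.inner_apply, RCLike.inner_apply]
    exact Finset.sum_congr rfl fun _ _ => mul_comm _ _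
  have hsym : A.transpose = A := G.isSymm_adjMatrix
  have key : ∀ (z : EuclideanSpace ℝ V) (i : V),
      ⟪b i, (WithLp.toLp 2 (A *ᵥ z) : EuclideanSpace ℝ V)⟫ = μ i * ⟪b i, z⟫ := by
    intro z i
    rw [hinner, hinner]
    calc ∑ v, b i v * (A *ᵥ z) v = (⇑(b i)) ⬝ᵥ (A *ᵥ z) := rfl
      _ = ((⇑(b i)) ᵥ* A) ⬝ᵥ z := Matrix.dotProduct_mulVec _ _ _
      _ = (A *ᵥ ⇑(b i)) ⬝ᵥ z := by conv_lhs => rw [← hsym, Matrix.vecMul_transpose]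
      _ = (μ i • ⇑(b i)) ⬝ᵥ z := by rw [hA.mulVec_eigenvectorBasis]
      _ = μ i * ∑ v, b i v * z v := by
          simp [smul_dotProduct, dotProduct, Finset.mul_sum, mul_assoc]
  set y : EuclideanSpace ℝ V := WithLp.toLp 2 x with hydef
  set c : V → ℝ := fun i => ⟪(b i : EuclideanSpace ℝ V), y⟫ with hcdef
  set ones : EuclideanSpace ℝ V := WithLp.toLp 2 (fun _ => (1 : ℝ)) with honesdef
  have hones : A *ᵥ (ones : V → ℝ) = (k : ℝ) • (ones : V → ℝ) := by
    funext v
    show (A *ᵥ Function.const V (1:ℝ)) v = (k : ℝ) * 1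
    rw [SimpleGraph.adjMatrix_mulVec_const_apply_of_regular hreg]
  set d : V → ℝ := fun i => ⟪(b i : EuclideanSpace ℝ V), ones⟫ with hddef
  have hd : ∀ i, μ i * d i = (k : ℝ) * d i := by
    intro i
    have h1 := key ones i
    rw [show (WithLp.toLp 2 (A *ᵥ ones) : EuclideanSpace ℝ V) = ((k : ℝ) • ones : EuclideanSpace ℝ V) from by rw [hones]; rfl,
      real_inner_smul_right] at h1
    linarith [h1]
  have hex : ∃ i, d i ≠ 0 := by
    by_contra h
    push_neg at h
    have h0 : ones = 0 := by
      rw [← b.sum_repr' ones]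
      refine Finset.sum_eq_zero fun i _ => ?_
      rw [show ⟪(b i : EuclideanSpace ℝ V), ones⟫ = d i from rfl, h i, zero_smul]
    exact one_ne_zero
      (congrArg (fun f : EuclideanSpace ℝ V => f (Classical.arbitrary V)) h0)
  obtain ⟨i₀, hi₀d⟩ := hex
  have hμ₀ : μ i₀ = (k : ℝ) := mul_right_cancel₀ hi₀d (hd i₀)
  have hle : ∀ i, i ≠ i₀ → μ i ≤ lam2 := by
    intro i hne
    by_contra hgt
    push_neg at hgt
    have hsub : ({i, i₀} : Finset V) ⊆ Finset.univ.filter fun j => lam2 < μ j := by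
      intro j hj
      simp only [Finset.mem_insert, Finset.mem_singleton] at hj
      rcases hj with rfl | rfl
      · simp [hgt]
      · simp [hμ₀, hlt]
    have h2 : 2 ≤ (Finset.univ.filter fun j => lam2 < μ j).card := by
      have := Finset.card_le_card hsub
      rwa [Finset.card_insert_of_notMem (by simp [hne]), Finset.card_singleton] at this
    omega
  have hdzero : ∀ i, i ≠ i₀ → d i = 0 := by
    intro i hne
    have h1 := hd i
    have h2 : (μ i - (k : ℝ)) * d i = 0 := by ring_nf; linarith [h1]
    rcases mul_eq_zero.mp h2 with h | h
    · exact absurd h (by have := hle i hne; intro hc; nlinarith)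
    · exact h
  have hones_eq : ones = d i₀ • (b i₀ : EuclideanSpace ℝ V) := by
    have hsingle := Finset.sum_eq_single (s := Finset.univ)
      (f := fun i => (⟪(b i : EuclideanSpace ℝ V), ones⟫ : ℝ) • (b i : EuclideanSpace ℝ V)) i₀
      (fun i _ hne => by
        show (⟪(b i : EuclideanSpace ℝ V), ones⟫ : ℝ) • (b i : EuclideanSpace ℝ V) = 0
        rw [show (⟪(b i : EuclideanSpace ℝ V), ones⟫ : ℝ) = d i from rfl, hdzero i hne, zero_smul])
      (fun h => absurd (Finset.mem_univ i₀) h)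
    conv_lhs => rw [← b.sum_repr' ones]
    exact hsingle
  have hc₀ : c i₀ = 0 := by
    have h1 : ⟪ones, y⟫ = 0 := by
      rw [hinner]
      simpa [honesdef, hydef] using hx
    rw [hones_eq, real_inner_smul_left] at h1
    exact (mul_eq_zero.mp h1).resolve_left hi₀d
  have hQ : ∑ v, x v * ∑ u, A v u * x u = ∑ i, μ i * (c i) ^ 2 := by
    have h1 : ∑ v, x v * ∑ u, A v u * x u
        = ⟪y, (WithLp.toLp 2 (A *ᵥ x) : EuclideanSpace ℝ V)⟫ := by
      rw [hinner]; rfl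
    rw [h1, ← b.sum_inner_mul_inner y (WithLp.toLp 2 (A *ᵥ x) : EuclideanSpace ℝ V)]
    refine Finset.sum_congr rfl fun i _ => ?_
    rw [key y i, real_inner_comm]
    show c i * (μ i * c i) = μ i * c i ^ 2
    ring
  have hN : ∑ v, (x v) ^ 2 = ∑ i, (c i) ^ 2 := by
    have h1 := b.sum_inner_mul_inner y y
    rw [hinner y y] at h1
    have h2 : ∑ v, (x v) ^ 2 = ∑ v, y v * y v := by
      refine Finset.sum_congr rfl fun v _ => ?_
      rw [sq]
    rw [h2, ← h1]
    refine Finset.sum_congr rfl fun i _ => ?_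
    rw [real_inner_comm]
    show c i * c i = c i ^ 2
    ring
  rw [hQ, hN, Finset.mul_sum]
  refine Finset.sum_le_sum fun i _ => ?_
  by_cases hi : i = i₀
  · subst hi; rw [hc₀]; simp
  · exact mul_le_mul_of_nonneg_right (hle i hi) (sq_nonneg _)

theorem stmt15 {V : Type*} [Fintype V] [DecidableEq V] (G : SimpleGraph V) [DecidableRel G.Adj]
    (k : ℕ) (lam : ℝ) (hconn : G.Connected) (hreg : G.IsRegularOfDegree k)
    (hlam : secondEigenvalue G ≤ lam) (hlamk : lam < (k : ℝ))
    (S : Finset V) (hS : S.Nonempty) (hH : lam ≤ avgDegFinset G S)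
    (hG1 : (Finset.univ.filter fun v => v ∉ S ∧ ∃ u ∈ S, G.Adj u v).Nonempty)
    (hG2 : (Finset.univ.filter fun v => v ∉ S ∧ ∀ u ∈ S, ¬G.Adj u v).Nonempty) :
    avgDegFinset G (Finset.univ.filter fun v => v ∉ S ∧ ∀ u ∈ S, ¬G.Adj u v) ≤ lam ∧
      (avgDegFinset G (Finset.univ.filter fun v => v ∉ S ∧ ∀ u ∈ S, ¬G.Adj u v) = lam →
        avgDegFinset G S = lam ∧ secondEigenvalue G = lam) := by
  classical
  set C := Finset.univ.filter (fun v => v ∉ S ∧ ∀ u ∈ S, ¬G.Adj u v) with hCdef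
  have hdisj : ∀ v ∈ C, v ∉ S := fun v hv => ((Finset.mem_filter.mp hv).2).1
  have hnadj : ∀ v ∈ C, ∀ u ∈ S, ¬G.Adj u v := fun v hv => ((Finset.mem_filter.mp hv).2).2
  set s : ℝ := (S.card : ℝ) with hsdef
  set c : ℝ := (C.card : ℝ) with hcdef
  have hs : 0 < s := by rw [hsdef]; exact_mod_cast Finset.card_pos.mpr hS
  have hc : 0 < c := by rw [hcdef]; exact_mod_cast Finset.card_pos.mpr hG2
  set ES : ℝ := ∑ v ∈ S, ((S.filter (G.Adj v)).card : ℝ) with hESdef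
  set EC : ℝ := ∑ v ∈ C, ((C.filter (G.Adj v)).card : ℝ) with hECdef
  have havgS : avgDegFinset G S = ES / s := by
    unfold avgDegFinset; rw [hESdef, hsdef]
  have havgC : avgDegFinset G C = EC / c := by
    unfold avgDegFinset; rw [hECdef, hcdef]
  set x : V → ℝ := fun v => if v ∈ S then c else if v ∈ C then -s else 0 with hxdef
  have hxS : ∀ v ∈ S, x v = c := fun v hv => by rw [hxdef]; simp [hv]
  have hxC : ∀ v ∈ C, x v = -s := fun v hv => by rw [hxdef]; simp [hdisj v hv, hv]
  have hxO : ∀ v, v ∉ S → v ∉ C → x v = 0 := fun v h1 h2 => by rw [hxdef]; simp [h1, h2]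
  have hx0 : ∑ v, x v = 0 := by
    have hsplit : ∀ v, x v = (if v ∈ S then c else 0) + (if v ∈ C then -s else 0) := by
      intro v
      by_cases h1 : v ∈ S
      · have h2 : v ∉ C := fun h => hdisj v h h1
        rw [hxS v h1, if_pos h1, if_neg h2, add_zero]
      · by_cases h2 : v ∈ C
        · rw [hxC v h2, if_neg h1, if_pos h2, zero_add]
        · rw [hxO v h1 h2, if_neg h1, if_neg h2, add_zero]
    calc ∑ v, x v = ∑ v, ((if v ∈ S then c else 0) + (if v ∈ C then -s else 0)) :=
          Finset.sum_congr rfl fun v _ => hsplit v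
      _ = (∑ v, if v ∈ S then c else 0) + (∑ v, if v ∈ C then -s else 0) :=
          Finset.sum_add_distrib
      _ = s * c + c * (-s) := by
          rw [Finset.sum_ite_mem, Finset.sum_ite_mem, Finset.univ_inter, Finset.univ_inter,
            Finset.sum_const, Finset.sum_const, nsmul_eq_mul, nsmul_eq_mul, ← hsdef, ← hcdef]
      _ = 0 := by ring
  have hA0 : ∀ v ∈ S, ∀ u ∈ C, (G.adjMatrix ℝ) v u = 0 := fun v hv u hu => by
    rw [SimpleGraph.adjMatrix_apply, if_neg (hnadj u hu v hv)]
  have hA0' : ∀ v ∈ C, ∀ u ∈ S, (G.adjMatrix ℝ) v u = 0 := fun v hv u hu => by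
    rw [SimpleGraph.adjMatrix_apply, if_neg]
    intro hadj
    exact hnadj v hv u hu hadj.symm
  have hpt : ∀ v u, x v * (G.adjMatrix ℝ) v u * x u =
      (if v ∈ S ∧ u ∈ S then c ^ 2 * (G.adjMatrix ℝ) v u else 0)
      + (if v ∈ C ∧ u ∈ C then s ^ 2 * (G.adjMatrix ℝ) v u else 0) := by
    intro v u
    by_cases hvS : v ∈ S
    · have hvC : v ∉ C := fun h => hdisj v h hvS
      rw [if_neg (fun h : v ∈ C ∧ u ∈ C => hvC h.1)]
      by_cases huS : u ∈ S
      · rw [hxS v hvS, hxS u huS, if_pos ⟨hvS, huS⟩]; ring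
      · rw [if_neg (fun h : v ∈ S ∧ u ∈ S => huS h.2)]
        by_cases huC : u ∈ C
        · rw [hA0 v hvS u huC]; ring
        · rw [hxO u huS huC]; ring
    · rw [if_neg (fun h : v ∈ S ∧ u ∈ S => hvS h.1)]
      by_cases hvC : v ∈ C
      · by_cases huC : u ∈ C
        · rw [hxC v hvC, hxC u huC, if_pos ⟨hvC, huC⟩]; ring
        · rw [if_neg (fun h : v ∈ C ∧ u ∈ C => huC h.2)]
          by_cases huS : u ∈ S
          · rw [hA0' v hvC u huS]; ring
          · rw [hxO u huS huC]; ring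
      · rw [hxO v hvS hvC, if_neg (fun h : v ∈ C ∧ u ∈ C => hvC h.1)]; ring
  have hSsum : ∀ v, ∑ u ∈ S, (G.adjMatrix ℝ) v u = ((S.filter (G.Adj v)).card : ℝ) := by
    intro v
    simp [SimpleGraph.adjMatrix_apply, Finset.sum_boole]
  have hCsum : ∀ v, ∑ u ∈ C, (G.adjMatrix ℝ) v u = ((C.filter (G.Adj v)).card : ℝ) := by
    intro v
    simp [SimpleGraph.adjMatrix_apply, Finset.sum_boole]
  have hQ1 : ∑ v, ∑ u, (if v ∈ S ∧ u ∈ S then c ^ 2 * (G.adjMatrix ℝ) v u else 0)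
      = c ^ 2 * ES := by
    calc ∑ v, ∑ u, (if v ∈ S ∧ u ∈ S then c ^ 2 * (G.adjMatrix ℝ) v u else 0)
        = ∑ v, (if v ∈ S then ∑ u, (if u ∈ S then c ^ 2 * (G.adjMatrix ℝ) v u else 0) else 0) := by
          refine Finset.sum_congr rfl fun v _ => ?_
          by_cases hv : v ∈ S <;> simp [hv]
      _ = ∑ v ∈ S, ∑ u ∈ S, c ^ 2 * (G.adjMatrix ℝ) v u := by
          rw [Finset.sum_ite_mem, Finset.univ_inter]
          exact Finset.sum_congr rfl fun v _ => by rw [Finset.sum_ite_mem, Finset.univ_inter]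
      _ = c ^ 2 * ES := by
          rw [hESdef, Finset.mul_sum]
          exact Finset.sum_congr rfl fun v _ => by rw [← Finset.mul_sum, hSsum v]
  have hQ2 : ∑ v, ∑ u, (if v ∈ C ∧ u ∈ C then s ^ 2 * (G.adjMatrix ℝ) v u else 0)
      = s ^ 2 * EC := by
    calc ∑ v, ∑ u, (if v ∈ C ∧ u ∈ C then s ^ 2 * (G.adjMatrix ℝ) v u else 0)
        = ∑ v, (if v ∈ C then ∑ u, (if u ∈ C then s ^ 2 * (G.adjMatrix ℝ) v u else 0) else 0) := by
          refine Finset.sum_congr rfl fun v _ => ?_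
          by_cases hv : v ∈ C <;> simp [hv]
      _ = ∑ v ∈ C, ∑ u ∈ C, s ^ 2 * (G.adjMatrix ℝ) v u := by
          rw [Finset.sum_ite_mem, Finset.univ_inter]
          exact Finset.sum_congr rfl fun v _ => by rw [Finset.sum_ite_mem, Finset.univ_inter]
      _ = s ^ 2 * EC := by
          rw [hECdef, Finset.mul_sum]
          exact Finset.sum_congr rfl fun v _ => by rw [← Finset.mul_sum, hCsum v]
  have hx2 : ∑ v, (x v) ^ 2 = s * c ^ 2 + c * s ^ 2 := by
    have hsplit : ∀ v, (x v) ^ 2 = (if v ∈ S then c ^ 2 else 0) + (if v ∈ C then s ^ 2 else 0) := by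
      intro v
      by_cases h1 : v ∈ S
      · have h2 : v ∉ C := fun h => hdisj v h h1
        rw [hxS v h1, if_pos h1, if_neg h2, add_zero]
      · by_cases h2 : v ∈ C
        · rw [hxC v h2, if_neg h1, if_pos h2, zero_add]; ring
        · rw [hxO v h1 h2, if_neg h1, if_neg h2, add_zero]; ring
    calc ∑ v, (x v) ^ 2 = ∑ v, ((if v ∈ S then c ^ 2 else 0) + (if v ∈ C then s ^ 2 else 0)) :=
          Finset.sum_congr rfl fun v _ => hsplit v
      _ = (∑ v, if v ∈ S then c ^ 2 else 0) + (∑ v, if v ∈ C then s ^ 2 else 0) :=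
          Finset.sum_add_distrib
      _ = s * c ^ 2 + c * s ^ 2 := by
          rw [Finset.sum_ite_mem, Finset.sum_ite_mem, Finset.univ_inter, Finset.univ_inter,
            Finset.sum_const, Finset.sum_const, nsmul_eq_mul, nsmul_eq_mul, ← hsdef, ← hcdef]
  -- card V ≥ 2
  obtain ⟨v₀, hv₀⟩ := hS
  obtain ⟨w₀, hw₀⟩ := hG2
  have hn2 : 2 ≤ Fintype.card V := by
    have hne : v₀ ≠ w₀ := fun h => (Finset.mem_filter.mp hw₀).2.1 (h ▸ hv₀)
    exact Fintype.one_lt_card_iff_nontrivial.mpr ⟨v₀, w₀, hne⟩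
  have hlt : secondEigenvalue G < (k : ℝ) := lt_of_le_of_lt hlam hlamk
  have hquad := my_quad_le G k (secondEigenvalue G) (my_eig_count_le_one G hn2) hreg hlt x hx0
  have hLHS : ∑ v, x v * ∑ u, (G.adjMatrix ℝ) v u * x u = c ^ 2 * ES + s ^ 2 * EC := by
    calc ∑ v, x v * ∑ u, (G.adjMatrix ℝ) v u * x u
        = ∑ v, ∑ u, x v * (G.adjMatrix ℝ) v u * x u := by
          refine Finset.sum_congr rfl fun v _ => ?_
          rw [Finset.mul_sum]
          exact Finset.sum_congr rfl fun u _ => by ring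
      _ = ∑ v, ∑ u, ((if v ∈ S ∧ u ∈ S then c ^ 2 * (G.adjMatrix ℝ) v u else 0)
          + (if v ∈ C ∧ u ∈ C then s ^ 2 * (G.adjMatrix ℝ) v u else 0)) :=
          Finset.sum_congr rfl fun v _ => Finset.sum_congr rfl fun u _ => hpt v u
      _ = (∑ v, ∑ u, (if v ∈ S ∧ u ∈ S then c ^ 2 * (G.adjMatrix ℝ) v u else 0))
          + ∑ v, ∑ u, (if v ∈ C ∧ u ∈ C then s ^ 2 * (G.adjMatrix ℝ) v u else 0) := by
          rw [← Finset.sum_add_distrib]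
          exact Finset.sum_congr rfl fun v _ => Finset.sum_add_distrib
      _ = c ^ 2 * ES + s ^ 2 * EC := by rw [hQ1, hQ2]
  rw [hLHS, hx2] at hquad
  clear_value x ES EC s c C
  -- hquad : c^2 * ES + s^2 * EC ≤ secondEigenvalue G * (s * c^2 + c * s^2)
  have hES : lam * s ≤ ES := by
    rw [havgS, le_div_iff₀ hs] at hH
    exact hH
  have hpos : 0 < s * c ^ 2 + c * s ^ 2 := by
    have h1 := mul_pos hs (pow_pos hc 2)
    have h2 := mul_pos hc (pow_pos hs 2)
    linarith
  have key1 : secondEigenvalue G * (s * c ^ 2 + c * s ^ 2) ≤ lam * (s * c ^ 2 + c * s ^ 2) :=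
    mul_le_mul_of_nonneg_right hlam (le_of_lt hpos)
  have key2 : c ^ 2 * (lam * s) ≤ c ^ 2 * ES := mul_le_mul_of_nonneg_left hES (sq_nonneg c)
  constructor
  · rw [havgC, div_le_iff₀ hc]
    have h3 : s ^ 2 * EC ≤ s ^ 2 * (lam * c) := by nlinarith [hquad, key1, key2]
    exact le_of_mul_le_mul_left h3 (pow_pos hs 2)
  · intro heq
    rw [havgC, div_eq_iff (ne_of_gt hc)] at heq
    rw [heq] at hquad
    have hge : lam ≤ secondEigenvalue G := by
      have h4 : lam * (s * c ^ 2 + c * s ^ 2) ≤ secondEigenvalue G * (s * c ^ 2 + c * s ^ 2) := by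
        nlinarith [hquad, key2]
      exact le_of_mul_le_mul_right h4 hpos
    have heig : secondEigenvalue G = lam := le_antisymm hlam hge
    refine ⟨?_, heig⟩
    rw [havgS, div_eq_iff (ne_of_gt hs)]
    rw [heig] at hquad
    have h5 : c ^ 2 * ES ≤ c ^ 2 * (lam * s) := by nlinarith [hquad]
    have h6 : ES ≤ lam * s := le_of_mul_le_mul_left h5 (pow_pos hc 2)
    linarith [hES, h6]
end

section
/- Let G be a connected k-regular finite simple graph and λ a real number with λ₂(G) ≤ λ < k. Suppose G contains a nonempty induced subgraph H on s vertices with t edges such that either the average degree of H is at least λ or the spectral radius (largest adjacency eigenvalue) of H is greater than λ. Then the number of vertices of G satisfies |V(G)| ≤ s + ((2k − λ − 1)/(k − λ))·(ks − 2t). -/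
set_option linter.unusedSectionVars false


open Polynomial

section Helpers

open Matrix SimpleGraph Finset

variable {V : Type*} [Fintype V] [DecidableEq V] (G : SimpleGraph V) [DecidableRel G.Adj]

lemma Aentry_symm (u v : V) : (G.adjMatrix ℝ) u v = (G.adjMatrix ℝ) v u := by
  simp [G.adjMatrix_apply, SimpleGraph.adj_comm]

lemma adj_dot_symm (x y : V → ℝ) :
    x ⬝ᵥ (G.adjMatrix ℝ *ᵥ y) = y ⬝ᵥ (G.adjMatrix ℝ *ᵥ x) := by
  rw [Matrix.dotProduct_mulVec, dotProduct_comm]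
  congr 1
  funext v
  rw [adjMatrix_vecMul_apply, adjMatrix_mulVec_apply]

variable {k : ℕ}

lemma mulVec_ones (hreg : G.IsRegularOfDegree k) :
    G.adjMatrix ℝ *ᵥ (fun _ => (1:ℝ)) = fun _ => (k:ℝ) := by
  funext v
  rw [adjMatrix_mulVec_apply]
  simp [hreg v]

lemma rowsum_k (hreg : G.IsRegularOfDegree k) (u : V) :
    ∑ v, (G.adjMatrix ℝ) u v = (k:ℝ) := by
  have := congrFun (mulVec_ones G hreg) u
  simpa [mulVec, dotProduct] using this

lemma dot_expand (x y : V → ℝ) :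
    x ⬝ᵥ (G.adjMatrix ℝ *ᵥ y) = ∑ u, ∑ v, (G.adjMatrix ℝ) u v * (x u * y v) := by
  simp only [dotProduct, mulVec, dotProduct, Finset.mul_sum]
  congr 1; ext u; congr 1; ext v; ring

lemma quad_le_k (hreg : G.IsRegularOfDegree k) (x : V → ℝ) :
    x ⬝ᵥ (G.adjMatrix ℝ *ᵥ x) ≤ (k:ℝ) * (x ⬝ᵥ x) := by
  rw [dot_expand]
  have h2 : ∑ u, ∑ v, (G.adjMatrix ℝ) u v * (x u * x v)
      ≤ ∑ u, ∑ v, (G.adjMatrix ℝ) u v * ((x u)^2/2 + (x v)^2/2) := by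
    apply Finset.sum_le_sum; intro u _
    apply Finset.sum_le_sum; intro v _
    apply mul_le_mul_of_nonneg_left _ (by simp [G.adjMatrix_apply]; positivity)
    nlinarith [sq_nonneg (x u - x v)]
  refine h2.trans (le_of_eq ?_)
  have h3 : ∀ u v, (G.adjMatrix ℝ) u v * ((x u)^2/2 + (x v)^2/2)
      = (G.adjMatrix ℝ) u v * (x u)^2/2 + (G.adjMatrix ℝ) u v * (x v)^2/2 := by
    intro u v; ring
  simp only [h3, Finset.sum_add_distrib]
  have h4 : ∑ u, ∑ v, (G.adjMatrix ℝ) u v * (x u)^2/2 = (k:ℝ)/2 * ∑ u, (x u)^2 := by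
    rw [Finset.mul_sum]
    congr 1; ext u
    rw [← Finset.sum_div, ← Finset.sum_mul, rowsum_k G hreg]
    ring
  have h5 : ∑ u, ∑ v, (G.adjMatrix ℝ) u v * (x v)^2/2 = (k:ℝ)/2 * ∑ u, (x u)^2 := by
    rw [Finset.sum_comm, Finset.mul_sum]
    congr 1; ext v
    simp only [fun u => Aentry_symm G u v]
    rw [← Finset.sum_div, ← Finset.sum_mul, rowsum_k G hreg]
    ring
  rw [h4, h5]
  have : x ⬝ᵥ x = ∑ u, (x u)^2 := by
    simp [dotProduct, sq]
  rw [this]; ring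

/-- eigenvectors of eigenvalue `k` are constant on connected regular graphs -/
lemma eigen_const (hconn : G.Connected) (hreg : G.IsRegularOfDegree k)
    (w : V → ℝ) (hw : G.adjMatrix ℝ *ᵥ w = (k:ℝ) • w) (u v : V) : w u = w v := by
  obtain ⟨v₀, -, hmax⟩ := Finset.exists_max_image Finset.univ w ⟨u, Finset.mem_univ u⟩
  have hmax' : ∀ z, w z ≤ w v₀ := fun z => hmax z (Finset.mem_univ z)
  -- neighbors of a maximizer are maximizers
  have step : ∀ z, w z = w v₀ → ∀ y, G.Adj z y → w y = w v₀ := by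
    intro z hz y hy
    by_contra hne
    have hlt : w y < w v₀ := lt_of_le_of_ne (hmax' y) hne
    have h1 : (G.adjMatrix ℝ *ᵥ w) z = ∑ x ∈ G.neighborFinset z, w x :=
      adjMatrix_mulVec_apply _ _ _
    have h2 : ∑ x ∈ G.neighborFinset z, w x < ∑ _x ∈ G.neighborFinset z, w v₀ := by
      apply Finset.sum_lt_sum (fun x _ => hmax' x)
      exact ⟨y, by rwa [SimpleGraph.mem_neighborFinset], hlt⟩
    rw [hw] at h1
    simp only [Pi.smul_apply, smul_eq_mul] at h1
    rw [Finset.sum_const] at h2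
    have hcard : (G.neighborFinset z).card = k := hreg z
    rw [hcard] at h2
    rw [hz] at h1
    rw [← h1] at h2
    simp [nsmul_eq_mul] at h2
  -- propagate along walks
  have walkprop : ∀ {a b : V} (_ : G.Walk a b), w a = w v₀ → w b = w v₀ := by
    intro a b p
    induction p with
    | nil => exact fun h => h
    | cons h p ih => intro ha; exact ih (step _ ha _ h)
  have hall : ∀ z, w z = w v₀ := by
    intro z
    obtain ⟨p⟩ := hconn.preconnected v₀ z
    exact walkprop p rfl
  rw [hall u, hall v]

end Helpers

section ListLemmas

lemma list_filter_le_one (p : ℝ → Bool) : ∀ (l : List ℝ),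
    (∀ i (h : i < l.length), i + 1 < l.length → ¬ p l[i]) → (l.filter p).length ≤ 1 := by
  intro l
  induction l with
  | nil => intro _; simp
  | cons a t ih =>
    intro h
    rcases eq_or_ne t [] with rfl | ht
    · rw [List.filter_cons]
      split <;> simp
    · have hlen : 0 < t.length := List.length_pos_iff.mpr ht
      have h0 : ¬ p a := by
        have := h 0 (by simp) (by simp [Nat.succ_lt_succ hlen])
        simpa using this
      rw [List.filter_cons_of_neg (by simpa using h0)]
      apply ih
      intro i hi hi1
      have := h (i+1) (by simpa using Nat.succ_lt_succ hi) (by simpa using Nat.succ_lt_succ hi1)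
      simpa using this

lemma multiset_filter_gt_le_one (M : Multiset ℝ) :
    (M.filter (fun x => ((M.sort (· ≤ ·)).getD ((M.sort (· ≤ ·)).length - 2) 0) < x)).card
      ≤ 1 := by
  have hsort : (M.sort (· ≤ ·)).Pairwise (· ≤ ·) := M.pairwise_sort _
  have hM : ((M.sort (· ≤ ·) : List ℝ) : Multiset ℝ) = M := M.sort_eq _
  set l := M.sort (· ≤ ·) with hldef
  set piv : ℝ := l.getD (l.length - 2) 0 with hpiv
  rw [← hM, Multiset.filter_coe, Multiset.coe_card]
  apply list_filter_le_one
  intro i hi hi1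
  have hlt : l.length - 2 < l.length := by omega
  have hple : l.getD (l.length - 2) 0 = l[l.length - 2] := l.getD_eq_getElem 0 hlt
  have hle : l[i] ≤ l[l.length - 2] := by
    have := hsort.rel_get_of_le (a := ⟨i, hi⟩) (b := ⟨l.length - 2, hlt⟩)
      (by simp only [Fin.mk_le_mk]; omega)
    simpa using this
  simp only [hpiv, hple, decide_eq_true_eq]
  exact not_lt.mpr hle

end ListLemmas

section Spectral

open Matrix SimpleGraph Finset

variable {V : Type*} [Fintype V] [DecidableEq V] (G : SimpleGraph V) [DecidableRel G.Adj]

lemma inner_dot' {A : Matrix V V ℝ} (hA : A.IsHermitian) (x : EuclideanSpace ℝ V) (i : V) :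
    @inner ℝ _ _ (hA.eigenvectorBasis i) x = (⇑(hA.eigenvectorBasis i)) ⬝ᵥ x := by
  rw [PiLp.inner_apply]
  simp [dotProduct, RCLike.inner_apply]
  exact Finset.sum_congr rfl (fun _ _ => mul_comm _ _)

lemma dot_decomp {A : Matrix V V ℝ} (hA : A.IsHermitian) (x : V → ℝ) :
    x = ∑ i, ((⇑(hA.eigenvectorBasis i)) ⬝ᵥ x) • ⇑(hA.eigenvectorBasis i) := by
  have h := congrArg WithLp.ofLp ((hA.eigenvectorBasis).sum_repr' (WithLp.toLp 2 x))
  simp_rw [inner_dot' hA] at h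
  simp only [WithLp.ofLp_sum, WithLp.ofLp_smul, WithLp.ofLp_toLp] at h
  exact h.symm

lemma basis_dot_self {A : Matrix V V ℝ} (hA : A.IsHermitian) (i : V) :
    (⇑(hA.eigenvectorBasis i)) ⬝ᵥ (⇑(hA.eigenvectorBasis i)) = 1 := by
  have := orthonormal_iff_ite.mp hA.eigenvectorBasis.orthonormal i i
  rw [inner_dot' hA] at this
  simpa using this

lemma dot_sum_right (x : V → ℝ) (f : V → V → ℝ) :
    x ⬝ᵥ (∑ i, f i) = ∑ i, x ⬝ᵥ f i := by
  simp only [dotProduct, Finset.sum_apply, Finset.mul_sum]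
  exact Finset.sum_comm

lemma mulVec_sum_right (A : Matrix V V ℝ) (f : V → V → ℝ) :
    A *ᵥ (∑ i, f i) = ∑ i, A *ᵥ f i :=
  map_sum A.mulVecLin f Finset.univ

variable {k : ℕ}

/-- The key Rayleigh quotient bound: for `x ⊥ 𝟙`, `xᵀAx ≤ λ₂ ‖x‖²`. -/
lemma rayleigh_second [Nonempty V] (hconn : G.Connected) (hreg : G.IsRegularOfDegree k)
    (x : V → ℝ) (hx : ∑ v, x v = 0) :
    x ⬝ᵥ (G.adjMatrix ℝ *ᵥ x) ≤ secondEigenvalue G * (x ⬝ᵥ x) := by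
  set A := G.adjMatrix ℝ with hAdef
  have hA : A.IsHermitian := adjMatrix_isHermitian G
  set b := hA.eigenvectorBasis with hbdef
  set α := hA.eigenvalues with hαdef
  set ones : V → ℝ := fun _ => 1 with honesdef
  -- existence of i₀ pairing with ones
  obtain ⟨i₀, hi₀⟩ : ∃ i, (⇑(b i)) ⬝ᵥ ones ≠ 0 := by
    by_contra hcon
    push_neg at hcon
    have hdec := dot_decomp hA ones
    simp only [← hbdef, hcon, zero_smul, Finset.sum_const_zero] at hdec
    obtain ⟨v⟩ := ‹Nonempty V›
    have := congrFun hdec v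
    simp [honesdef] at this
  -- α i₀ = k
  have heig : ∀ i, A *ᵥ ⇑(b i) = α i • ⇑(b i) := fun i => hA.mulVec_eigenvectorBasis i
  have hαi₀ : α i₀ = k := by
    have h1 : (⇑(b i₀)) ⬝ᵥ (A *ᵥ ones) = (k:ℝ) * ((⇑(b i₀)) ⬝ᵥ ones) := by
      rw [hAdef, mulVec_ones G hreg]
      simp [dotProduct, honesdef, Finset.mul_sum, mul_comm]
    have h2 : (⇑(b i₀)) ⬝ᵥ (A *ᵥ ones) = α i₀ * ((⇑(b i₀)) ⬝ᵥ ones) := by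
      rw [hAdef, adj_dot_symm G, ← hAdef, heig i₀]
      rw [dotProduct_smul, dotProduct_comm]
      simp
    rw [h1] at h2
    rcases mul_right_cancel₀ hi₀ h2.symm with h
    exact h
  -- b i₀ is constant
  have hconst : ∀ u v, ⇑(b i₀) u = ⇑(b i₀) v := by
    apply eigen_const G hconn hreg
    rw [heig i₀, hαi₀]
  -- eigenvalues are at most k
  have hle_k : ∀ i, α i ≤ (k:ℝ) := by
    intro i
    have h1 : (⇑(b i)) ⬝ᵥ (A *ᵥ ⇑(b i)) = α i := by
      rw [heig i, dotProduct_smul, basis_dot_self hA]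
      simp
    have h2 := quad_le_k G hreg (⇑(b i))
    rw [← hAdef] at h2
    rw [h1, basis_dot_self hA, mul_one] at h2
    exact h2
  -- all other eigenvalues are ≤ secondEigenvalue
  have hsecond : ∀ i, i ≠ i₀ → α i ≤ secondEigenvalue G := by
    intro i hne
    by_contra hgt
    push_neg at hgt
    -- two eigenvalues above the pivot: contradiction with the count lemma
    have hcount := multiset_filter_gt_le_one (eigMultiset G)
    have hpiv : secondEigenvalue G
        = (((eigMultiset G).sort (· ≤ ·)).getD ((((eigMultiset G).sort (· ≤ ·))).length - 2) 0) := rfl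
    have hi₀gt : secondEigenvalue G < α i₀ := lt_of_lt_of_le hgt (hαi₀ ▸ hle_k i)
    have higt : secondEigenvalue G < α i := hgt
    have hsub : ({i, i₀} : Finset V) ⊆ Finset.univ.filter (fun j => secondEigenvalue G < α j) := by
      intro j hj
      rcases Finset.mem_insert.mp hj with rfl | hj
      · exact Finset.mem_filter.mpr ⟨Finset.mem_univ _, higt⟩
      · rcases Finset.mem_singleton.mp hj with rfl
        exact Finset.mem_filter.mpr ⟨Finset.mem_univ _, hi₀gt⟩
    have hcard2 : 2 ≤ (Finset.univ.filter (fun j => secondEigenvalue G < α j)).card := by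
      have := Finset.card_le_card hsub
      rwa [Finset.card_pair hne] at this
    have hfm : ((eigMultiset G).filter (fun x => secondEigenvalue G < x)).card
        = (Finset.univ.filter (fun j => secondEigenvalue G < α j)).card := by
      rw [eigMultiset, Multiset.filter_map, Multiset.card_map]
      rfl
    rw [← hpiv] at hcount
    omega
  -- decompose x
  set z : V → ℝ := fun i => (⇑(b i)) ⬝ᵥ x with hzdef
  have hz₀ : z i₀ = 0 := by
    obtain ⟨v⟩ := ‹Nonempty V›
    have : ∀ u, ⇑(b i₀) u = ⇑(b i₀) v := fun u => hconst u v
    calc z i₀ = ∑ u, ⇑(b i₀) u * x u := rfl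
    _ = ∑ u, ⇑(b i₀) v * x u := by
        apply Finset.sum_congr rfl; intro u _; rw [this u]
    _ = ⇑(b i₀) v * ∑ u, x u := by rw [Finset.mul_sum]
    _ = 0 := by rw [hx, mul_zero]
  have hxdec : x = ∑ i, z i • ⇑(b i) := dot_decomp hA x
  have hnorm : x ⬝ᵥ x = ∑ i, (z i)^2 := by
    nth_rewrite 2 [hxdec]
    rw [dot_sum_right]
    apply Finset.sum_congr rfl
    intro i _
    rw [dotProduct_smul, dotProduct_comm]
    simp [hzdef, sq, smul_eq_mul, mul_comm]
  have hquad : x ⬝ᵥ (A *ᵥ x) = ∑ i, α i * (z i)^2 := by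
    nth_rewrite 2 [hxdec]
    rw [show A *ᵥ (∑ i, z i • ⇑(b i)) = ∑ i, z i • (α i • ⇑(b i)) by
      rw [mulVec_sum_right]
      apply Finset.sum_congr rfl
      intro i _
      rw [Matrix.mulVec_smul, heig i]]
    rw [dot_sum_right]
    apply Finset.sum_congr rfl
    intro i _
    rw [dotProduct_smul, dotProduct_smul, dotProduct_comm]
    simp [hzdef, sq, smul_eq_mul]
    ring
  rw [hquad, hnorm, Finset.mul_sum]
  apply Finset.sum_le_sum
  intro i _
  rcases eq_or_ne i i₀ with rfl | hne
  · rw [hz₀]; simp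
  · exact mul_le_mul_of_nonneg_right (hsecond i hne) (sq_nonneg _)

end Spectral

section TopEig

open Matrix SimpleGraph Finset

variable {V : Type*} [Fintype V] [DecidableEq V] (G : SimpleGraph V) [DecidableRel G.Adj]

lemma exists_top_eigenvector [Nonempty V] :
    ∃ w : V → ℝ, (w ⬝ᵥ w = 1) ∧ G.adjMatrix ℝ *ᵥ w = largestEigenvalue G • w := by
  have hA : (G.adjMatrix ℝ).IsHermitian := adjMatrix_isHermitian G
  have hcard : ((eigMultiset G).sort (· ≤ ·)).length = Fintype.card V := by
    rw [Multiset.length_sort, eigMultiset, Multiset.card_map]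
    exact Finset.card_univ
  have hpos : 0 < ((eigMultiset G).sort (· ≤ ·)).length := by
    rw [hcard]; exact Fintype.card_pos
  have hmem : largestEigenvalue G ∈ (eigMultiset G) := by
    rw [← Multiset.mem_sort (· ≤ ·)]
    have : largestEigenvalue G
        = ((eigMultiset G).sort (· ≤ ·))[((eigMultiset G).sort (· ≤ ·)).length - 1] :=
      ((eigMultiset G).sort (· ≤ ·)).getD_eq_getElem 0 (by omega)
    rw [this]
    exact List.getElem_mem _
  obtain ⟨i, -, hi⟩ := Multiset.mem_map.mp hmem
  refine ⟨⇑(hA.eigenvectorBasis i), basis_dot_self hA i, ?_⟩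
  rw [hA.mulVec_eigenvectorBasis i, hi]

end TopEig

section Combi

open Matrix SimpleGraph Finset

variable {V : Type*} [Fintype V] [DecidableEq V] (G : SimpleGraph V) [DecidableRel G.Adj]

/-- double counting of edges between two vertex sets -/
lemma double_count (X Y : Finset V) :
    ∑ v ∈ X, (Y.filter (G.Adj v)).card = ∑ v ∈ Y, (X.filter (G.Adj v)).card := by
  simp only [Finset.card_filter]
  rw [Finset.sum_comm]
  apply Finset.sum_congr rfl
  intro v _
  apply Finset.sum_congr rfl
  intro u _
  simp [SimpleGraph.adj_comm]

lemma quad_expand {A : Matrix V V ℝ}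
    (hsymm : ∀ x y : V → ℝ, x ⬝ᵥ (A *ᵥ y) = y ⬝ᵥ (A *ᵥ x))
    (y g : V → ℝ) (a b : ℝ) :
    (a • y + b • g) ⬝ᵥ (A *ᵥ (a • y + b • g))
      = a^2 * (y ⬝ᵥ (A *ᵥ y)) + 2*a*b * (y ⬝ᵥ (A *ᵥ g)) + b^2 * (g ⬝ᵥ (A *ᵥ g)) := by
  rw [Matrix.mulVec_add, Matrix.mulVec_smul, Matrix.mulVec_smul]
  rw [add_dotProduct, smul_dotProduct, smul_dotProduct]
  rw [dotProduct_add, dotProduct_add]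
  rw [dotProduct_smul, dotProduct_smul, dotProduct_smul,
    dotProduct_smul]
  rw [hsymm g y]
  simp only [smul_eq_mul]
  ring

lemma dot_expand_sq (x : V → ℝ) : x ⬝ᵥ x = ∑ v, (x v)^2 := by
  simp [dotProduct, sq]

lemma sum_support_subtype (S : Finset V) (g : V → ℝ) (hg : ∀ v ∉ S, g v = 0) :
    ∑ v, g v = ∑ p : {x // x ∈ S}, g ↑p := by
  rw [← Finset.sum_subtype S (fun x => Iff.rfl) g]
  symm
  apply Finset.sum_subset (Finset.subset_univ S)
  intro v _ hv
  exact hg v hv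

lemma sum_support_coe {V : Type*} [Fintype V] [DecidableEq V] (S : Finset V) (g : V → ℝ)
    (hg : ∀ v ∉ S, g v = 0) :
    ∑ v, g v = ∑ p : (↑S : Set V), g ↑p := by
  rw [Finset.sum_finset_coe]
  symm
  apply Finset.sum_subset (Finset.subset_univ S)
  intro v _ hv
  exact hg v hv

end Combi


lemma disjoint_filter_of_disjoint {V : Type*} [DecidableEq V] {X Y : Finset V}
    (p q : V → Prop) [DecidablePred p] [DecidablePred q] (h : Disjoint X Y) :
    Disjoint (X.filter p) (Y.filter q) := by
  apply Finset.disjoint_left.mpr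
  intro x hx hx'
  exact Finset.disjoint_left.mp h (Finset.mem_of_mem_filter _ hx) (Finset.mem_of_mem_filter _ hx')

open Matrix SimpleGraph Finset in
theorem stmt16 {V : Type*} [Fintype V] [DecidableEq V] (G : SimpleGraph V) [DecidableRel G.Adj]
    (k : ℕ) (lam : ℝ) (hconn : G.Connected) (hreg : G.IsRegularOfDegree k)
    (hlam : secondEigenvalue G ≤ lam) (hlamk : lam < (k : ℝ))
    (S : Finset V) (hS : S.Nonempty) (s t : ℕ)
    (hs : S.card = s)
    (ht : ∑ v ∈ S, (S.filter (G.Adj v)).card = 2 * t)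
    (hH : lam ≤ avgDegFinset G S ∨
      lam < largestEigenvalue (SimpleGraph.induce (↑S : Set V) G)) :
    (Fintype.card V : ℝ) ≤
      (s : ℝ) + (2 * (k : ℝ) - lam - 1) / ((k : ℝ) - lam) * ((k : ℝ) * s - 2 * t) := by
  classical
  have hNV : Nonempty V := ⟨hS.choose⟩
  set AD : Finset V := Finset.univ.filter (fun v => v ∉ S ∧ ∃ u ∈ S, G.Adj u v) with hADdef
  set CD : Finset V := Finset.univ.filter (fun v => v ∉ S ∧ ¬ ∃ u ∈ S, G.Adj u v) with hCDdef
  set dS : V → ℕ := fun v => (S.filter (G.Adj v)).card with hdSdef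
  set dA : V → ℕ := fun v => (AD.filter (G.Adj v)).card with hdAdef
  set dC : V → ℕ := fun v => (CD.filter (G.Adj v)).card with hdCdef
  set a : ℕ := AD.card with hadef
  set c : ℕ := CD.card with hcdef
  set e : ℕ := ∑ u ∈ S, dA u with hedef
  set f : ℕ := ∑ w ∈ CD, dA w with hfdef
  set tC2 : ℕ := ∑ w ∈ CD, dC w with htC2def
  -- partition facts
  have hdisjSA : Disjoint S AD := by
    rw [Finset.disjoint_left]; intro x hx hx'
    exact ((Finset.mem_filter.mp hx').2).1 hx
  have hdisjSC : Disjoint S CD := by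
    rw [Finset.disjoint_left]; intro x hx hx'
    exact ((Finset.mem_filter.mp hx').2).1 hx
  have hdisjAC : Disjoint AD CD := by
    rw [Finset.disjoint_left]; intro x hx hx'
    exact ((Finset.mem_filter.mp hx').2).2 ((Finset.mem_filter.mp hx).2).2
  have hcover : ∀ w : V, w ∈ S ∨ w ∈ AD ∨ w ∈ CD := by
    intro w
    by_cases hw : w ∈ S
    · exact Or.inl hw
    by_cases hw2 : ∃ u ∈ S, G.Adj u w
    · exact Or.inr (Or.inl (Finset.mem_filter.mpr ⟨Finset.mem_univ _, hw, hw2⟩))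
    · exact Or.inr (Or.inr (Finset.mem_filter.mpr ⟨Finset.mem_univ _, hw, hw2⟩))
  have huniv : S ∪ AD ∪ CD = Finset.univ := by
    apply Finset.eq_univ_iff_forall.mpr
    intro w
    rcases hcover w with h | h | h
    · exact Finset.mem_union.mpr (Or.inl (Finset.mem_union.mpr (Or.inl h)))
    · exact Finset.mem_union.mpr (Or.inl (Finset.mem_union.mpr (Or.inr h)))
    · exact Finset.mem_union.mpr (Or.inr h)
  -- degree split
  have hdeg : ∀ v : V, dS v + dA v + dC v = k := by
    intro v
    have h1 : (Finset.univ.filter (G.Adj v)).card = k := by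
      rw [← SimpleGraph.neighborFinset_eq_filter]
      exact hreg v
    rw [← huniv] at h1
    rw [Finset.filter_union, Finset.filter_union] at h1
    have d1 : Disjoint (S.filter (G.Adj v)) (AD.filter (G.Adj v)) :=
      disjoint_filter_of_disjoint _ _ hdisjSA
    have d2 : Disjoint (S.filter (G.Adj v) ∪ AD.filter (G.Adj v)) (CD.filter (G.Adj v)) := by
      rw [← Finset.filter_union]
      exact disjoint_filter_of_disjoint _ _
        (Finset.disjoint_union_left.mpr ⟨hdisjSC, hdisjAC⟩)
    rw [Finset.card_union_of_disjoint d2, Finset.card_union_of_disjoint d1] at h1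
    exact h1
  -- no S-CD edges
  have hSC0 : ∀ u ∈ S, dC u = 0 := by
    intro u hu
    show (CD.filter (G.Adj u)).card = 0
    rw [Finset.card_eq_zero, Finset.filter_eq_empty_iff]
    intro w hw
    intro hadj
    exact ((Finset.mem_filter.mp hw).2).2 ⟨u, hu, hadj⟩
  have hCS0 : ∀ w ∈ CD, dS w = 0 := by
    intro w hw
    show (S.filter (G.Adj w)).card = 0
    rw [Finset.card_eq_zero, Finset.filter_eq_empty_iff]
    intro v hv hadj
    exact ((Finset.mem_filter.mp hw).2).2 ⟨v, hv, hadj.symm⟩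
  -- e + 2t = k*s
  have hE : e + 2*t = k * s := by
    have h1 : ∑ u ∈ S, (dS u + dA u + dC u) = k * s := by
      calc ∑ u ∈ S, (dS u + dA u + dC u) = ∑ _u ∈ S, k :=
            Finset.sum_congr rfl (fun u _ => hdeg u)
        _ = k * s := by rw [Finset.sum_const, hs, smul_eq_mul, mul_comm]
    have h2 : ∑ u ∈ S, dC u = 0 := Finset.sum_eq_zero hSC0
    rw [Finset.sum_add_distrib, Finset.sum_add_distrib, h2, add_zero, ht] at h1
    omega
  -- e from the AD side
  have heA : e = ∑ w ∈ AD, dS w := double_count G S AD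
  have hae : a ≤ e := by
    rw [heA, hadef]
    calc AD.card = ∑ _w ∈ AD, 1 := by rw [Finset.sum_const, smul_eq_mul, mul_one]
      _ ≤ ∑ w ∈ AD, dS w := by
          apply Finset.sum_le_sum
          intro w hw
          obtain ⟨u, hu, hadj⟩ := ((Finset.mem_filter.mp hw).2).2
          have : u ∈ S.filter (G.Adj w) := Finset.mem_filter.mpr ⟨hu, hadj.symm⟩
          exact Finset.card_pos.mpr ⟨u, this⟩
  have hF : f + tC2 = k * c := by
    have h1 : ∑ w ∈ CD, (dS w + dA w + dC w) = k * c := by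
      calc ∑ w ∈ CD, (dS w + dA w + dC w) = ∑ _w ∈ CD, k :=
            Finset.sum_congr rfl (fun w _ => hdeg w)
        _ = k * c := by rw [Finset.sum_const, smul_eq_mul, mul_comm]
    have h2 : ∑ w ∈ CD, dS w = 0 := Finset.sum_eq_zero hCS0
    rw [Finset.sum_add_distrib, Finset.sum_add_distrib, h2, zero_add] at h1
    omega
  have hFE : f + e ≤ k * a := by
    have hf' : f = ∑ u ∈ AD, dC u := double_count G CD AD
    have : ∑ u ∈ AD, (dC u + dS u) ≤ ∑ _u ∈ AD, k := by
      apply Finset.sum_le_sum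
      intro u _
      have := hdeg u
      omega
    rw [Finset.sum_add_distrib, Finset.sum_const, smul_eq_mul, mul_comm, ← hadef] at this
    rw [hf', heA]
    omega
  have hcard : Fintype.card V = s + a + c := by
    rw [← Finset.card_univ, ← huniv]
    rw [Finset.card_union_of_disjoint, Finset.card_union_of_disjoint hdisjSA, hs]
    exact Finset.disjoint_union_left.mpr ⟨hdisjSC, hdisjAC⟩
  -- spectral step: the induced average degree of CD is at most lam
  set A : Matrix V V ℝ := G.adjMatrix ℝ with hAdef
  have hsymm : ∀ x y : V → ℝ, x ⬝ᵥ (A *ᵥ y) = y ⬝ᵥ (A *ᵥ x) := adj_dot_symm G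
  have hmvind : ∀ (X : Finset V) (v : V),
      (A *ᵥ (fun w => if w ∈ X then (1:ℝ) else 0)) v = ((X.filter (G.Adj v)).card : ℝ) := by
    intro X v
    rw [hAdef, adjMatrix_mulVec_apply]
    rw [Finset.sum_ite_mem]
    rw [Finset.sum_const, nsmul_eq_mul, mul_one]
    congr 1
    congr 1
    ext w
    simp only [Finset.mem_inter, SimpleGraph.mem_neighborFinset, Finset.mem_filter]
    tauto
  have htc : (tC2:ℝ) ≤ lam * c := by
    -- the key inequality, given a suitable vector y supported on S
    have hkey : ∀ y : V → ℝ, (∀ v, v ∉ S → y v = 0) →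
        lam * (y ⬝ᵥ y) ≤ y ⬝ᵥ (A *ᵥ y) → (∑ v, y v) ≠ 0 →
        (tC2 : ℝ) ≤ lam * c := by
      intro y hy0 hy2 hWne
      set W : ℝ := ∑ v, y v with hWdef
      set g : V → ℝ := fun v => if v ∈ CD then (1:ℝ) else 0 with hgdef
      set x : V → ℝ := (c:ℝ) • y + (-W) • g with hxdef
      have hgsum : ∑ v, g v = (c:ℝ) := by
        simp only [hgdef]
        rw [Finset.sum_ite_mem, Finset.univ_inter]
        rw [Finset.sum_const, nsmul_eq_mul, mul_one, hcdef]
      have hxsum : ∑ v, x v = 0 := by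
        simp only [hxdef, Pi.add_apply, Pi.smul_apply, smul_eq_mul]
        rw [Finset.sum_add_distrib, ← Finset.mul_sum, ← Finset.mul_sum, ← hWdef, hgsum]
        ring
      have hyg : y ⬝ᵥ g = 0 := by
        apply Finset.sum_eq_zero
        intro v _
        by_cases hv : v ∈ CD
        · have : v ∉ S := ((Finset.mem_filter.mp hv).2).1
          simp [hy0 v this]
        · simp [hgdef, hv]
      have hgg : g ⬝ᵥ g = (c:ℝ) := by
        have : ∀ v, g v * g v = g v := by
          intro v; simp only [hgdef]; by_cases hv : v ∈ CD <;> simp [hv]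
        calc g ⬝ᵥ g = ∑ v, g v * g v := rfl
          _ = ∑ v, g v := Finset.sum_congr rfl (fun v _ => this v)
          _ = (c:ℝ) := hgsum
      have hmvg : ∀ v, (A *ᵥ g) v = ((dC v : ℕ) : ℝ) := fun v => hmvind CD v
      have hyAg : y ⬝ᵥ (A *ᵥ g) = 0 := by
        apply Finset.sum_eq_zero
        intro v _
        by_cases hv : v ∈ S
        · rw [hmvg v, hSC0 v hv]; simp
        · simp [hy0 v hv]
      have hgAg : g ⬝ᵥ (A *ᵥ g) = (tC2:ℝ) := by
        calc g ⬝ᵥ (A *ᵥ g) = ∑ v, g v * ((dC v : ℕ) : ℝ) := by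
              apply Finset.sum_congr rfl; intro v _; rw [hmvg v]
          _ = ∑ v, (if v ∈ CD then ((dC v : ℕ):ℝ) else 0) := by
              apply Finset.sum_congr rfl; intro v _
              simp only [hgdef]; by_cases hv : v ∈ CD <;> simp [hv]
          _ = ∑ v ∈ CD, ((dC v : ℕ):ℝ) := by rw [Finset.sum_ite_mem, Finset.univ_inter]
          _ = (tC2:ℝ) := by rw [htC2def]; push_cast; rfl
      have hray := rayleigh_second G hconn hreg x hxsum
      have hxnorm : x ⬝ᵥ x = (c:ℝ)^2 * (y ⬝ᵥ y) + W^2 * c := by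
        simp only [hxdef]
        rw [add_dotProduct, smul_dotProduct, smul_dotProduct,
          dotProduct_add, dotProduct_add, dotProduct_smul,
          dotProduct_smul, dotProduct_smul, dotProduct_smul,
          dotProduct_comm g y, hyg, hgg]
        simp only [smul_eq_mul]
        ring
      have hxquad : x ⬝ᵥ (A *ᵥ x) = (c:ℝ)^2 * (y ⬝ᵥ (A *ᵥ y)) + W^2 * (tC2:ℝ) := by
        simp only [hxdef]
        rw [quad_expand hsymm, hyAg, hgAg]
        ring
      have hxnn : (0:ℝ) ≤ x ⬝ᵥ x := by
        rw [dot_expand_sq]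
        positivity
      have hray2 : x ⬝ᵥ (A *ᵥ x) ≤ lam * (x ⬝ᵥ x) := by
        calc x ⬝ᵥ (A *ᵥ x) ≤ secondEigenvalue G * (x ⬝ᵥ x) := hray
          _ ≤ lam * (x ⬝ᵥ x) := mul_le_mul_of_nonneg_right hlam hxnn
      rw [hxquad, hxnorm] at hray2
      have hW2 : (0:ℝ) < W^2 := by positivity
      nlinarith [mul_le_mul_of_nonneg_left hy2 (sq_nonneg (c:ℝ))]
    -- now produce the vector y from the hypothesis hH
    have hs_pos : 0 < (s:ℝ) := by
      have : 0 < S.card := Finset.card_pos.mpr hS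
      rw [hs] at this
      exact_mod_cast this
    rcases hH with havg | hlrg
    · -- average degree case: indicator vector of S
      set y : V → ℝ := fun v => if v ∈ S then (1:ℝ) else 0 with hydef
      have hy0 : ∀ v, v ∉ S → y v = 0 := by intro v hv; simp [hydef, hv]
      have hysum : ∑ v, y v = (s:ℝ) := by
        simp only [hydef]
        rw [Finset.sum_ite_mem, Finset.univ_inter, Finset.sum_const, nsmul_eq_mul, mul_one, hs]
      have hyy : y ⬝ᵥ y = (s:ℝ) := by
        have : ∀ v, y v * y v = y v := by
          intro v; simp only [hydef]; by_cases hv : v ∈ S <;> simp [hv]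
        calc y ⬝ᵥ y = ∑ v, y v * y v := rfl
          _ = ∑ v, y v := Finset.sum_congr rfl (fun v _ => this v)
          _ = (s:ℝ) := hysum
      have hQy : y ⬝ᵥ (A *ᵥ y) = 2 * (t:ℝ) := by
        calc y ⬝ᵥ (A *ᵥ y) = ∑ v, y v * ((dS v : ℕ):ℝ) := by
              apply Finset.sum_congr rfl; intro v _; rw [hmvind S v]
          _ = ∑ v, (if v ∈ S then ((dS v : ℕ):ℝ) else 0) := by
              apply Finset.sum_congr rfl; intro v _
              simp only [hydef]; by_cases hv : v ∈ S <;> simp [hv]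
          _ = ∑ v ∈ S, ((dS v : ℕ):ℝ) := by rw [Finset.sum_ite_mem, Finset.univ_inter]
          _ = 2 * (t:ℝ) := by rw [← Nat.cast_sum, ht]; push_cast; ring
      apply hkey y hy0
      · rw [hyy, hQy]
        have havg' : lam ≤ 2 * (t:ℝ) / (s:ℝ) := by
          have : avgDegFinset G S = 2 * (t:ℝ) / (s:ℝ) := by
            rw [avgDegFinset, hs, ← Nat.cast_sum, ht]
            push_cast; ring_nf
          rwa [this] at havg
        calc lam * (s:ℝ) ≤ (2 * (t:ℝ) / (s:ℝ)) * (s:ℝ) :=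
              mul_le_mul_of_nonneg_right havg' (le_of_lt hs_pos)
          _ = 2 * (t:ℝ) := by field_simp
      · rw [hysum]
        exact ne_of_gt hs_pos
    · -- spectral radius case: top eigenvector of the induced subgraph
      have hSnemp : Nonempty (↑S : Set V) := ⟨⟨hS.choose, hS.choose_spec⟩⟩
      obtain ⟨w, hw1, hw2⟩ := exists_top_eigenvector (SimpleGraph.induce (↑S : Set V) G)
      set μ : ℝ := largestEigenvalue (SimpleGraph.induce (↑S : Set V) G) with hμdef
      set y : V → ℝ := fun v => if h : v ∈ S then w ⟨v, h⟩ else 0 with hydef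
      have hy0 : ∀ v, v ∉ S → y v = 0 := by intro v hv; simp [hydef, hv]
      have hentry : ∀ p q : (↑S : Set V),
          ((SimpleGraph.induce (↑S : Set V) G).adjMatrix ℝ) p q = A ↑p ↑q := by
        intro p q
        rw [hAdef, SimpleGraph.adjMatrix_apply, SimpleGraph.adjMatrix_apply]
        exact if_congr Iff.rfl rfl rfl
      have hyp : ∀ p : (↑S : Set V), y ↑p = w p := by
        intro p
        have hp : (p:V) ∈ S := p.2
        simp only [hydef, dif_pos hp]
      have hmvy : ∀ p : (↑S : Set V),
          (A *ᵥ y) ↑p = (((SimpleGraph.induce (↑S : Set V) G).adjMatrix ℝ) *ᵥ w) p := by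
        intro p
        show ∑ u, A ↑p u * y u = _
        rw [show (∑ u, A ↑p u * y u) = ∑ q : (↑S : Set V), A ↑p ↑q * y ↑q from
          sum_support_coe S (fun u => A ↑p u * y u) (fun v hv => by simp only [hy0 v hv, mul_zero])]
        show _ = ∑ q : (↑S : Set V), _ * w q
        apply Finset.sum_congr rfl
        intro q _
        rw [hentry p q, hyp q]
      have hQy : y ⬝ᵥ (A *ᵥ y) = μ := by
        calc y ⬝ᵥ (A *ᵥ y) = ∑ v, y v * (A *ᵥ y) v := rfl
          _ = ∑ p : (↑S : Set V), y ↑p * (A *ᵥ y) ↑p :=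
              sum_support_coe S _ (fun v hv => by simp only [hy0 v hv, zero_mul])
          _ = ∑ p : (↑S : Set V), w p *
              ((((SimpleGraph.induce (↑S : Set V) G).adjMatrix ℝ) *ᵥ w) p) := by
              apply Finset.sum_congr rfl
              intro p _
              rw [hyp p, hmvy p]
          _ = w ⬝ᵥ (((SimpleGraph.induce (↑S : Set V) G).adjMatrix ℝ) *ᵥ w) := rfl
          _ = μ := by rw [hw2, dotProduct_smul, hw1]; simp
      have hyy : y ⬝ᵥ y = 1 := by
        calc y ⬝ᵥ y = ∑ v, y v * y v := rfl
          _ = ∑ p : (↑S : Set V), y ↑p * y ↑p :=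
              sum_support_coe S _ (fun v hv => by simp only [hy0 v hv, zero_mul])
          _ = ∑ p : (↑S : Set V), w p * w p := by
              apply Finset.sum_congr rfl; intro p _; rw [hyp p]
          _ = w ⬝ᵥ w := rfl
          _ = 1 := hw1
      apply hkey y hy0
      · rw [hyy, hQy, mul_one]
        exact le_of_lt hlrg
      · intro hW0
        have hray := rayleigh_second G hconn hreg y hW0
        rw [hQy, hyy, mul_one] at hray
        have : μ ≤ lam := le_trans hray hlam
        exact absurd hlrg (not_lt.mpr this)
  -- final assembly
  have hclam : (0:ℝ) < (k:ℝ) - lam := by linarith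
  have haeR : (a:ℝ) ≤ (e:ℝ) := by exact_mod_cast hae
  have hFR : (f:ℝ) + (tC2:ℝ) = (k:ℝ) * c := by exact_mod_cast hF
  have hFER : (f:ℝ) + (e:ℝ) ≤ (k:ℝ) * a := by exact_mod_cast hFE
  have hkae : (k:ℝ) * a ≤ (k:ℝ) * e :=
    mul_le_mul_of_nonneg_left haeR (by positivity)
  have hcle : ((k:ℝ) - lam) * c ≤ ((k:ℝ) - 1) * e := by linarith
  have hkse : (k:ℝ) * s - 2 * t = (e:ℝ) := by
    have : (e:ℝ) + 2 * t = (k:ℝ) * s := by exact_mod_cast hE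
    linarith
  rw [hcard, hkse]
  push_cast
  have key : (a:ℝ) + c ≤ (2 * (k:ℝ) - lam - 1) / ((k:ℝ) - lam) * e := by
    rw [div_mul_eq_mul_div, le_div_iff₀ hclam]
    nlinarith [mul_le_mul_of_nonneg_right haeR (le_of_lt hclam)]
  linarith
end
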